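/- arXiv:0812.3120 — 5 statements merged into one kernel-verified Lean document; each statement's English description precedes it below -/
import Mathlib

section
/- Let Y₁ ~ Gamma(N, 1) (chi-square with 2N degrees of freedom, scaled) and Y₂ ~ Exponential(1) be independent, and let η₁ ≠ η₂ be positive reals. Then X = η₁Y₁ + η₂Y₂ has cdf F_X(x) = 1 - (η₂/(η₂-η₁))^N e^{-x/η₂} + e^{-x/η₁} (η₁/(η₂-η₁)) Σ_{i=0}^{N-1} Σ_{l=0}^{i} (1/(i-l)!) (η₂/(η₂-η₁))^{N-1-i} (x/η₁)^{i-l} for x ≥ 0. -/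
open MeasureTheory ProbabilityTheory Real Set
open scoped ProbabilityTheory ENNReal

open Finset in
lemma integral_pow_mul_exp' (n : ℕ) (a : ℝ) (ha : a ≠ 0) (T : ℝ) :
    ∫ y in (0:ℝ)..T, y ^ n * Real.exp (-(a * y))
      = (Nat.factorial n : ℝ) / a ^ (n + 1)
        - Real.exp (-(a * T)) * ∑ k ∈ range (n + 1),
            (Nat.factorial n : ℝ) / (Nat.factorial k : ℝ) / a ^ (n + 1 - k) * T ^ k := by
  set c : ℕ → ℝ := fun k => (Nat.factorial n : ℝ) / (Nat.factorial k : ℝ) / a ^ (n + 1 - k)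
    with hc
  set S : ℝ → ℝ := fun y => ∑ k ∈ range (n + 1), c k * y ^ k with hS
  have hderiv : ∀ y : ℝ, HasDerivAt
      (fun y => -(Real.exp (-(a * y)) * S y)) (y ^ n * Real.exp (-(a * y))) y := by
    intro y
    have hE : HasDerivAt (fun y : ℝ => Real.exp (-(a * y))) (Real.exp (-(a * y)) * (-a)) y := by
      have h1 : HasDerivAt (fun y : ℝ => -(a * y)) (-a) y := by
        exact ((hasDerivAt_id y).const_mul a).neg.congr_deriv (by simp)
      exact h1.exp
    have hSd : HasDerivAt S (∑ k ∈ range (n + 1), c k * (k * y ^ (k - 1))) y := by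
      apply HasDerivAt.fun_sum
      intro k _
      exact (hasDerivAt_pow k y).const_mul (c k)
    have := (hE.mul hSd).neg
    refine this.congr_deriv ?_; symm
    have key : a * S y - ∑ k ∈ range (n + 1), c k * (k * y ^ (k - 1)) = y ^ n := by
      have h2 : ∑ k ∈ range (n + 1), c k * (k * y ^ (k - 1))
          = ∑ k ∈ range n, c (k + 1) * ((k + 1) * y ^ k) := by
        rw [Finset.sum_range_succ']
        simp
      rw [h2, hS]
      simp only [Finset.mul_sum]
      rw [Finset.sum_range_succ]
      have h3 : ∀ k ∈ range n, a * (c k * y ^ k) = c (k + 1) * ((k + 1) * y ^ k) := by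
        intro k hk
        have hk' : k < n := Finset.mem_range.mp hk
        have e1 : (n + 1 - k) = (n - k) + 1 := by omega
        have e2 : (n + 1 - (k + 1)) = n - k := by omega
        rw [hc]
        simp only [e1, e2, pow_succ, Nat.factorial_succ]
        have hkf : (Nat.factorial k : ℝ) ≠ 0 := Nat.cast_ne_zero.mpr (Nat.factorial_ne_zero k)
        have hap : a ^ (n - k) ≠ 0 := pow_ne_zero _ ha
        push_cast
        field_simp
      rw [Finset.sum_congr rfl h3]
      have h4 : a * (c n * y ^ n) = y ^ n + (y ^ n - y ^ n) := by
        rw [hc]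
        have e2 : (n + 1 - n) = 1 := by omega
        simp only [e2, pow_one]
        have hnf : (Nat.factorial n : ℝ) ≠ 0 := Nat.cast_ne_zero.mpr (Nat.factorial_ne_zero n)
        field_simp
        ring
      ring_nf
      rw [hc] at *
      have e2 : (n + 1 - n) = 1 := by omega
      simp only [e2, pow_one]
      have hnf : (Nat.factorial n : ℝ) ≠ 0 := Nat.cast_ne_zero.mpr (Nat.factorial_ne_zero n)
      field_simp
      simp only [add_comm (1:ℝ)]
      ring
    calc y ^ n * Real.exp (-(a * y))
        = Real.exp (-(a * y)) * (a * S y - ∑ k ∈ range (n + 1), c k * (k * y ^ (k - 1))) := by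
          rw [key]; ring
      _ = -(Real.exp (-(a * y)) * (-a) * S y
            + Real.exp (-(a * y)) * ∑ k ∈ range (n + 1), c k * (k * y ^ (k - 1))) := by ring
  have hcont : Continuous fun y : ℝ => y ^ n * Real.exp (-(a * y)) := by
    continuity
  have := intervalIntegral.integral_eq_sub_of_hasDerivAt
    (f := fun y => -(Real.exp (-(a * y)) * S y))
    (fun y _ => hderiv y) (hcont.intervalIntegrable 0 T)
  rw [this]
  have hS0 : S 0 = c 0 := by
    show ∑ k ∈ range (n + 1), c k * (0:ℝ) ^ k = c 0
    rw [Finset.sum_eq_single 0]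
    · simp
    · intro k _ hk; simp [zero_pow hk]
    · simp
  have hc0 : c 0 = (Nat.factorial n : ℝ) / a ^ (n + 1) := by simp [hc]
  simp only [mul_zero, neg_zero, Real.exp_zero, one_mul, hS0, hc0]
  ring

open Finset in
lemma sum_identity' (b T : ℝ) (N : ℕ) :
    (b - 1) * ∑ i ∈ range N, ∑ l ∈ range (i + 1),
        (1 / (Nat.factorial (i - l) : ℝ)) * b ^ (N - 1 - i) * T ^ (i - l)
      = ∑ k ∈ range N, (b ^ (N - k) - 1) * (T ^ k / (Nat.factorial k : ℝ)) := by
  have h1 : ∀ i ∈ range N, ∑ l ∈ range (i + 1),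
      (1 / (Nat.factorial (i - l) : ℝ)) * b ^ (N - 1 - i) * T ^ (i - l)
      = ∑ j ∈ range (i + 1), b ^ (N - 1 - i) * (T ^ j / (Nat.factorial j : ℝ)) := by
    intro i _
    have := Finset.sum_range_reflect
      (fun j => b ^ (N - 1 - i) * (T ^ j / (Nat.factorial j : ℝ))) (i + 1)
    rw [← this]
    refine Finset.sum_congr rfl fun l hl => ?_
    have : i + 1 - 1 - l = i - l := by omega
    rw [this]; ring
  rw [Finset.sum_congr rfl h1]
  -- swap sums
  have h2 : ∑ i ∈ range N, ∑ j ∈ range (i + 1),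
      b ^ (N - 1 - i) * (T ^ j / (Nat.factorial j : ℝ))
      = ∑ j ∈ range N, ∑ i ∈ Finset.Ico j N,
      b ^ (N - 1 - i) * (T ^ j / (Nat.factorial j : ℝ)) := by
    simp only [← Nat.Ico_zero_eq_range]
    rw [← Finset.sum_Ico_Ico_comm 0 N
        (fun j i => b ^ (N - 1 - i) * (T ^ j / (Nat.factorial j : ℝ)))]
  rw [h2, Finset.mul_sum]
  refine Finset.sum_congr rfl fun j hj => ?_
  have hjN : j < N := Finset.mem_range.mp hj
  -- inner geometric sum
  have h3 : ∑ i ∈ Finset.Ico j N, b ^ (N - 1 - i) = ∑ m ∈ range (N - j), b ^ m := by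
    rw [Finset.sum_Ico_eq_sum_range]
    have := Finset.sum_range_reflect (fun m => b ^ m) (N - j)
    rw [← this]
    refine Finset.sum_congr rfl fun m hm => ?_
    have hm' : m < N - j := Finset.mem_range.mp hm
    congr 1
    omega
  rw [mul_comm (b-1), Finset.sum_mul,
    Finset.sum_congr rfl (fun i (_ : i ∈ Finset.Ico j N) =>
      mul_assoc (b ^ (N - 1 - i)) (T ^ j / (Nat.factorial j : ℝ)) (b - 1)),
    ← Finset.sum_mul, h3, mul_comm (T ^ j / (Nat.factorial j : ℝ)) (b - 1), ← mul_assoc,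
    geom_sum_mul]

lemma exp_cdf (c : ℝ) :
    (volume.withDensity (fun y =>
        ENNReal.ofReal (if 0 ≤ y then Real.exp (-y) else 0))) (Iic c)
      = ENNReal.ofReal (1 - Real.exp (-c)) := by
  rw [withDensity_apply _ measurableSet_Iic]
  rcases lt_or_ge c 0 with hc | hc
  · have h0 : ∀ y ∈ Iic c, ENNReal.ofReal (if 0 ≤ y then Real.exp (-y) else 0) = 0 := by
      intro y hy
      have : ¬ (0 ≤ y) := by simp only [Set.mem_Iic] at hy; linarith
      simp [this]
    rw [setLIntegral_congr_fun measurableSet_Iic h0]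
    simp only [lintegral_zero]
    symm
    rw [ENNReal.ofReal_eq_zero]
    have : (1:ℝ) ≤ Real.exp (-c) := by
      rw [← Real.exp_zero]
      exact Real.exp_le_exp.mpr (by linarith)
    linarith
  · have hind : (fun y : ℝ => ENNReal.ofReal (if 0 ≤ y then Real.exp (-y) else 0))
        = (Ici (0:ℝ)).indicator (fun y => ENNReal.ofReal (Real.exp (-y))) := by
      funext y
      by_cases h : 0 ≤ y <;> simp [Set.indicator, h]
    rw [hind, lintegral_indicator measurableSet_Ici, Measure.restrict_restrict measurableSet_Ici,
      Set.Ici_inter_Iic]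
    rw [← ofReal_integral_eq_lintegral_ofReal]
    · rw [MeasureTheory.integral_Icc_eq_integral_Ioc, ← intervalIntegral.integral_of_le hc]
      have := integral_pow_mul_exp' 0 1 one_ne_zero c
      simp only [pow_zero, one_mul, one_pow, Nat.factorial_zero, Nat.cast_one] at this
      rw [this]
      norm_num
    · exact (Continuous.integrableOn_Icc (by continuity))
    · exact Filter.Eventually.of_forall fun y => (Real.exp_pos _).le

/-- Cdf of `X = η₁Y₁ + η₂Y₂` where `Y₁ ~ Gamma(N,1)` and `Y₂ ~ Exp(1)` are
independent and `η₁ ≠ η₂` are positive reals. -/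
theorem cdf_gamma_plus_exp
    {Ω : Type*} [MeasureSpace Ω] [IsProbabilityMeasure (ℙ : Measure Ω)]
    (N : ℕ) (hN : 1 ≤ N) (η₁ η₂ : ℝ) (hη₁ : 0 < η₁) (hη₂ : 0 < η₂) (hne : η₁ ≠ η₂)
    (Y₁ Y₂ : Ω → ℝ)
    (hY₁ : Measure.map Y₁ ℙ = volume.withDensity (fun y =>
        ENNReal.ofReal (if 0 ≤ y then y ^ (N - 1) * Real.exp (-y) / (Nat.factorial (N - 1)) else 0)))
    (hY₂ : Measure.map Y₂ ℙ = volume.withDensity (fun y =>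
        ENNReal.ofReal (if 0 ≤ y then Real.exp (-y) else 0)))
    (hIndep : IndepFun Y₁ Y₂ ℙ) :
    ∀ x : ℝ, 0 ≤ x →
      ℙ {ω | η₁ * Y₁ ω + η₂ * Y₂ ω ≤ x}
        = ENNReal.ofReal
            (1 - (η₂ / (η₂ - η₁)) ^ N * Real.exp (-x / η₂)
              + Real.exp (-x / η₁) * (η₁ / (η₂ - η₁)) *
                  ∑ i ∈ Finset.range N, ∑ l ∈ Finset.range (i + 1),
                    (1 / (Nat.factorial (i - l) : ℝ)) *
                      (η₂ / (η₂ - η₁)) ^ (N - 1 - i) * (x / η₁) ^ (i - l)) := by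
  intro x hx
  -- notation
  set F : ℝ := (Nat.factorial (N - 1) : ℝ) with hF
  have hFpos : (0:ℝ) < F := by rw [hF]; exact_mod_cast Nat.factorial_pos _
  have hF0 : F ≠ 0 := hFpos.ne'
  set T : ℝ := x / η₁ with hTdef
  have hT0 : 0 ≤ T := div_nonneg hx hη₁.le
  have hη₁T : η₁ * T = x := by rw [hTdef]; field_simp
  have hηsub : η₂ - η₁ ≠ 0 := sub_ne_zero.mpr (Ne.symm hne)
  set a : ℝ := (η₂ - η₁) / η₂ with hadef
  have ha : a ≠ 0 := div_ne_zero hηsub hη₂.ne'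
  set b : ℝ := η₂ / (η₂ - η₁) with hbdef
  have hab : a⁻¹ = b := by rw [hadef, hbdef, inv_div]
  have hab1 : a * b = 1 := by rw [← hab]; field_simp
  set d : ℝ → ℝ := fun y => y ^ (N - 1) * Real.exp (-y) / F with hd
  have hd0 : ∀ y, 0 ≤ y → 0 ≤ d y := by
    intro y hy
    apply div_nonneg _ hFpos.le
    exact mul_nonneg (pow_nonneg hy _) (Real.exp_pos _).le
  set g₀ : ℝ → ℝ := fun y => 1 - Real.exp (-((x - η₁ * y) / η₂)) with hg₀
  set f₁e : ℝ → ℝ≥0∞ := fun y => ENNReal.ofReal (if 0 ≤ y then d y else 0) with hf₁e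
  set f₂e : ℝ → ℝ≥0∞ := fun y => ENNReal.ofReal (if 0 ≤ y then Real.exp (-y) else 0) with hf₂e
  set μ₁ : Measure ℝ := volume.withDensity f₁e with hμ₁def
  set μ₂ : Measure ℝ := volume.withDensity f₂e with hμ₂def
  have hY₁' : Measure.map Y₁ ℙ = μ₁ := hY₁
  have hY₂' : Measure.map Y₂ ℙ = μ₂ := hY₂
  have hdm : Measurable fun y : ℝ => if 0 ≤ y then d y else 0 := by
    apply Measurable.ite measurableSet_Ici _ measurable_const
    exact Continuous.measurable (by rw [hd]; fun_prop)
  have hf₁m : Measurable f₁e := hdm.ennreal_ofReal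
  -- nontriviality of the measures
  have hμ₁ne : μ₁ ≠ 0 := by
    intro h0
    have hlow : ENNReal.ofReal (Real.exp (-2) / F) * volume (Icc (1:ℝ) 2) ≤ μ₁ (Icc 1 2) := by
      rw [hμ₁def, withDensity_apply _ measurableSet_Icc, ← setLIntegral_const]
      apply setLIntegral_mono' measurableSet_Icc
      intro y hy
      obtain ⟨hy1, hy2⟩ := hy
      have h0y : (0:ℝ) ≤ y := by linarith
      rw [hf₁e]
      simp only [if_pos h0y]
      apply ENNReal.ofReal_le_ofReal
      rw [hd]
      rw [div_le_div_iff_of_pos_right hFpos]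
      have e1 : Real.exp (-2) ≤ Real.exp (-y) := Real.exp_le_exp.mpr (by linarith)
      have e2 : (1:ℝ) ≤ y ^ (N - 1) := one_le_pow₀ hy1
      nlinarith [Real.exp_pos (-y)]
    rw [h0] at hlow
    simp only [Measure.coe_zero, Pi.zero_apply, nonpos_iff_eq_zero, mul_eq_zero] at hlow
    rcases hlow with h | h
    · rw [ENNReal.ofReal_eq_zero] at h
      nlinarith [div_pos (Real.exp_pos (-2:ℝ)) hFpos]
    · rw [Real.volume_Icc] at h
      norm_num at h
  have hμ₂ne : μ₂ ≠ 0 := by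
    intro h0
    have h2 := exp_cdf 1
    rw [← hμ₂def, h0] at h2
    simp only [Measure.coe_zero, Pi.zero_apply] at h2
    have h1 : Real.exp (-1) < 1 := by
      rw [← Real.exp_zero]; exact Real.exp_lt_exp.mpr (by norm_num)
    rw [eq_comm, ENNReal.ofReal_eq_zero] at h2
    linarith
  have hmY₁ : AEMeasurable Y₁ ℙ := by
    by_contra h
    rw [Measure.map_of_not_aemeasurable h] at hY₁'
    exact hμ₁ne hY₁'.symm
  have hmY₂ : AEMeasurable Y₂ ℙ := by
    by_contra h
    rw [Measure.map_of_not_aemeasurable h] at hY₂'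
    exact hμ₂ne hY₂'.symm
  -- reduce to product measure
  have hmap : Measure.map (fun ω => (Y₁ ω, Y₂ ω)) ℙ = μ₁.prod μ₂ := by
    rw [← hY₁', ← hY₂']
    exact (ProbabilityTheory.indepFun_iff_map_prod_eq_prod_map_map hmY₁ hmY₂).mp hIndep
  have hSmeas : MeasurableSet {p : ℝ × ℝ | η₁ * p.1 + η₂ * p.2 ≤ x} :=
    measurableSet_le ((measurable_fst.const_mul η₁).add (measurable_snd.const_mul η₂))
      measurable_const
  have step1 : ℙ {ω | η₁ * Y₁ ω + η₂ * Y₂ ω ≤ x}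
      = (μ₁.prod μ₂) {p : ℝ × ℝ | η₁ * p.1 + η₂ * p.2 ≤ x} := by
    rw [← hmap, Measure.map_apply_of_aemeasurable (hmY₁.prodMk hmY₂) hSmeas]
    rfl
  have step2 : (μ₁.prod μ₂) {p : ℝ × ℝ | η₁ * p.1 + η₂ * p.2 ≤ x}
      = ∫⁻ y, f₁e y * ENNReal.ofReal (g₀ y) := by
    rw [Measure.prod_apply hSmeas]
    have hslice2 : ∀ y : ℝ, μ₂ (Prod.mk y ⁻¹' {p : ℝ × ℝ | η₁ * p.1 + η₂ * p.2 ≤ x})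
        = ENNReal.ofReal (g₀ y) := by
      intro y
      have hslice : (Prod.mk y ⁻¹' {p : ℝ × ℝ | η₁ * p.1 + η₂ * p.2 ≤ x})
          = Iic ((x - η₁ * y) / η₂) := by
        ext z
        simp only [mem_preimage, mem_setOf_eq, mem_Iic]
        rw [le_div_iff₀ hη₂]
        constructor <;> intro <;> nlinarith
      rw [hslice, hμ₂def, hf₂e, exp_cdf]
    rw [lintegral_congr hslice2, hμ₁def,
      lintegral_withDensity_eq_lintegral_mul _ hf₁m]
    · simp only [Pi.mul_apply]
    · apply Measurable.ennreal_ofReal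
      rw [hg₀]
      exact Continuous.measurable (by fun_prop)
  -- pointwise identification with an indicator function
  set H : ℝ → ℝ := (Icc (0:ℝ) T).indicator (fun y => d y * g₀ y) with hH
  have step3 : ∀ y : ℝ, f₁e y * ENNReal.ofReal (g₀ y) = ENNReal.ofReal (H y) := by
    intro y
    rw [hf₁e, hH]
    by_cases h0y : 0 ≤ y
    · simp only [if_pos h0y]
      by_cases hyT : y ≤ T
      · rw [Set.indicator_of_mem (by exact ⟨h0y, hyT⟩), ENNReal.ofReal_mul (hd0 y h0y)]
      · have hg0neg : g₀ y ≤ 0 := by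
          rw [hg₀]
          simp only
          have hy' : T < y := lt_of_not_ge hyT
          have hneg : x - η₁ * y < 0 := by nlinarith
          have h2 : (x - η₁ * y) / η₂ ≤ 0 := div_nonpos_of_nonpos_of_nonneg hneg.le hη₂.le
          have h3 : (1:ℝ) ≤ Real.exp (-((x - η₁ * y) / η₂)) := by
            rw [← Real.exp_zero]
            exact Real.exp_le_exp.mpr (by linarith)
          linarith
        rw [Set.indicator_of_notMem (by simp [hyT]),
          ENNReal.ofReal_eq_zero.mpr hg0neg, mul_zero, ENNReal.ofReal_zero]
    · simp only [if_neg h0y]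
      rw [Set.indicator_of_notMem (by simp [h0y])]
      simp
  -- convert to a Bochner integral
  have hcont : Continuous fun y => d y * g₀ y := by
    rw [hd, hg₀]; fun_prop
  have hHint : Integrable H := by
    rw [hH]
    exact (hcont.continuousOn.integrableOn_Icc).integrable_indicator measurableSet_Icc
  have hHnn : 0 ≤ᵐ[volume] H := by
    apply Filter.Eventually.of_forall
    intro y
    rw [hH]
    apply Set.indicator_nonneg
    intro y hy
    obtain ⟨hy0, hyT⟩ := hy
    apply mul_nonneg (hd0 y hy0)
    rw [hg₀]
    simp only [sub_nonneg]
    rw [← Real.exp_zero]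
    apply Real.exp_le_exp.mpr
    have hnum : 0 ≤ x - η₁ * y := by nlinarith
    have : 0 ≤ (x - η₁ * y) / η₂ := div_nonneg hnum hη₂.le
    linarith
  have step4 : ∫⁻ y, ENNReal.ofReal (H y) = ENNReal.ofReal (∫ y, H y) :=
    (ofReal_integral_eq_lintegral_ofReal hHint hHnn).symm
  have step5 : ∫ y, H y = ∫ y in (0:ℝ)..T, d y * g₀ y := by
    rw [hH, integral_indicator measurableSet_Icc, integral_Icc_eq_integral_Ioc,
      ← intervalIntegral.integral_of_le hT0]
  -- split the integrand
  have hsplit : ∀ y : ℝ, d y * g₀ y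
      = (1 / F) * (y ^ (N - 1) * Real.exp (-(1 * y)))
        - (Real.exp (-x / η₂) / F) * (y ^ (N - 1) * Real.exp (-(a * y))) := by
    intro y
    have hexp : Real.exp (-y) * Real.exp (-((x - η₁ * y) / η₂))
        = Real.exp (-x / η₂) * Real.exp (-(a * y)) := by
      rw [← Real.exp_add, ← Real.exp_add]
      congr 1
      rw [hadef]
      field_simp
      ring
    simp only [hd, hg₀, one_mul]
    linear_combination (-(y ^ (N - 1) / F)) * hexp
  have step6 : ∫ y in (0:ℝ)..T, d y * g₀ y
      = (1 / F) * (∫ y in (0:ℝ)..T, y ^ (N - 1) * Real.exp (-(1 * y)))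
        - (Real.exp (-x / η₂) / F) * (∫ y in (0:ℝ)..T, y ^ (N - 1) * Real.exp (-(a * y))) := by
    have hI1 : IntervalIntegrable (fun y : ℝ => (1 / F) * (y ^ (N - 1) * Real.exp (-(1 * y))))
        volume 0 T := (Continuous.intervalIntegrable (by fun_prop) 0 T)
    have hI2 : IntervalIntegrable
        (fun y : ℝ => (Real.exp (-x / η₂) / F) * (y ^ (N - 1) * Real.exp (-(a * y))))
        volume 0 T := (Continuous.intervalIntegrable (by fun_prop) 0 T)
    rw [intervalIntegral.integral_congr (g := fun y =>
        (1 / F) * (y ^ (N - 1) * Real.exp (-(1 * y)))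
          - (Real.exp (-x / η₂) / F) * (y ^ (N - 1) * Real.exp (-(a * y))))
      (fun y _ => hsplit y)]
    rw [intervalIntegral.integral_sub hI1 hI2, intervalIntegral.integral_const_mul,
      intervalIntegral.integral_const_mul]
  -- assemble
  rw [step1, step2, lintegral_congr step3, step4, step5, step6,
    integral_pow_mul_exp' (N - 1) 1 one_ne_zero T, integral_pow_mul_exp' (N - 1) a ha T]
  congr 1
  have hN1 : N - 1 + 1 = N := by omega
  rw [← hF]
  simp only [hN1, one_pow, div_one, one_mul]
  -- sums
  have hfac : ∀ k : ℕ, (Nat.factorial k : ℝ) ≠ 0 :=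
    fun k => Nat.cast_ne_zero.mpr (Nat.factorial_ne_zero k)
  have hsum1 : ∑ k ∈ Finset.range N, F / (Nat.factorial k : ℝ) * T ^ k
      = F * ∑ k ∈ Finset.range N, T ^ k / (Nat.factorial k : ℝ) := by
    rw [Finset.mul_sum]
    exact Finset.sum_congr rfl fun k _ => by field_simp
  have hsum2 : ∑ k ∈ Finset.range N, F / (Nat.factorial k : ℝ) / a ^ (N - k) * T ^ k
      = F * ∑ k ∈ Finset.range N, b ^ (N - k) * (T ^ k / (Nat.factorial k : ℝ)) := by
    rw [Finset.mul_sum]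
    refine Finset.sum_congr rfl fun k _ => ?_
    rw [← hab, inv_pow]
    field_simp
  have hsum3 : ∑ k ∈ Finset.range N, (b ^ (N - k) - 1) * (T ^ k / (Nat.factorial k : ℝ))
      = (∑ k ∈ Finset.range N, b ^ (N - k) * (T ^ k / (Nat.factorial k : ℝ)))
        - ∑ k ∈ Finset.range N, T ^ k / (Nat.factorial k : ℝ) := by
    rw [← Finset.sum_sub_distrib]
    exact Finset.sum_congr rfl fun k _ => by ring
  have hE1 : Real.exp (-T) = Real.exp (-x / η₁) := by
    rw [hTdef, neg_div]
  have hEA : Real.exp (-x / η₂) * Real.exp (-(a * T)) = Real.exp (-x / η₁) := by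
    rw [← Real.exp_add]
    congr 1
    rw [hadef, hTdef]
    field_simp
    ring
  have hb1 : η₁ / (η₂ - η₁) = b - 1 := by rw [hbdef]; field_simp; ring
  have hFa : F / a ^ N = F * b ^ N := by
    rw [div_eq_mul_inv, ← inv_pow, hab]
  rw [hsum1, hsum2, hE1, hb1, hFa,
    mul_assoc (Real.exp (-x / η₁)) (b - 1), sum_identity' b T N, hsum3, ← hEA]
  field_simp
  ring
end

section
/- With the setup of random vector quantization of an isotropic unit vector in ℂ^{N_t} using L = 2^B independent isotropic codewords, the expected squared angular distortion satisfies ((N_t-1)/N_t) · 2^{-B/(N_t-1)} ≤ E[sin²θ] ≤ 2^{-B/(N_t-1)}, where E[sin²θ] = 2^B Β(2^B, N_t/(N_t-1)). -/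
open Real Finset

/-- Gamma shift identity. -/
lemma gamma_add_nat_prod (s : ℝ) (hs : 0 < s) (n : ℕ) :
    Real.Gamma (s + n) = Real.Gamma s * ∏ k ∈ range n, (s + k) := by
  induction n with
  | zero => simp
  | succ n ih =>
    have h1 : s + ((n : ℕ) + 1 : ℕ) = (s + n) + 1 := by push_cast; ring
    have h2 : s + (n : ℝ) ≠ 0 := by positivity
    rw [h1, Real.Gamma_add_one h2, ih, prod_range_succ]
    ring

lemma telescope_prod (n : ℕ) :
    ∏ k ∈ range n, (((k : ℝ) + 1) / ((k : ℝ) + 2)) = 1 / ((n : ℝ) + 1) := by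
  induction n with
  | zero => simp
  | succ n ih =>
    rw [prod_range_succ, ih]
    have h1 : (n : ℝ) + 1 ≠ 0 := by positivity
    have h2 : (n : ℝ) + 2 ≠ 0 := by positivity
    push_cast
    field_simp
    ring

/-- Termwise upper bound via Bernoulli's inequality. -/
lemma term_upper {t : ℝ} (ht0 : 0 ≤ t) (ht1 : t ≤ 1) (a : ℝ) (ha0 : 0 < a) :
    a / (a + t) ≤ (a / (a + 1)) ^ t := by
  have hge : (-1:ℝ) ≤ 1/a := le_trans (by norm_num : (-1:ℝ) ≤ 0) (by positivity)
  have hb : (1 + 1/a) ^ t ≤ 1 + t * (1/a) :=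
    rpow_one_add_le_one_add_mul_self hge ht0 ht1
  have h1 : (1:ℝ) + 1/a = (a + 1)/a := by field_simp
  have h2 : (1:ℝ) + t * (1/a) = (a + t)/a := by field_simp
  rw [h1, h2] at hb
  have hpow : (0:ℝ) < ((a+1)/a) ^ t := rpow_pos_of_pos (by positivity) t
  calc a/(a+t) = ((a+t)/a)⁻¹ := by rw [inv_div]
    _ ≤ (((a+1)/a)^t)⁻¹ := by
        apply inv_anti₀ hpow hb
    _ = (((a+1)/a)⁻¹)^t := (Real.inv_rpow (by positivity) t).symm
    _ = (a/(a+1))^t := by rw [inv_div]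

/-- Termwise lower bound via Bernoulli's inequality. -/
lemma term_lower {t : ℝ} (ht0 : 0 ≤ t) (ht1 : t ≤ 1) (a : ℝ) (ha0 : 0 < a) :
    (a / (a + 1)) ^ t ≤ (a + 1) / (a + 1 + t) := by
  set c : ℝ := a + 1 with hc
  have hc1 : 1 < c := by simp [hc]; linarith
  have hc0 : 0 < c := by linarith
  have hs : -1 ≤ -(1/c) := by
    have : 1/c ≤ 1 := by rw [div_le_one hc0]; linarith
    linarith
  have hb : (1 + -(1/c)) ^ t ≤ 1 + t * -(1/c) :=
    rpow_one_add_le_one_add_mul_self hs ht0 ht1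
  have h1 : (1:ℝ) + -(1/c) = a/c := by rw [hc]; field_simp; ring
  rw [h1] at hb
  have h2 : 1 + t * -(1/c) ≤ c / (c + t) := by
    rw [le_div_iff₀ (by positivity)]
    have hctpos : 0 < c := hc0
    have expand : (1 + t * -(1/c)) * (c + t) = c + t - t - t^2/c := by
      field_simp; ring
    rw [expand]
    have : 0 ≤ t^2/c := by positivity
    linarith
  calc (a/(a+1))^t = (a/c)^t := by rw [hc]
    _ ≤ 1 + t * -(1/c) := hb
    _ ≤ c/(c+t) := h2
    _ = (a+1)/(a+1+t) := by rw [hc]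

lemma prod_upper {t : ℝ} (ht0 : 0 ≤ t) (ht1 : t ≤ 1) (n : ℕ) (hn : 1 ≤ n) :
    ∏ k ∈ range n, (((k:ℝ)+1)/((k:ℝ)+1+t)) ≤ (n:ℝ) ^ (-t) := by
  have h1 : ∏ k ∈ range n, (((k:ℝ)+1)/((k:ℝ)+1+t))
      ≤ ∏ k ∈ range n, ((((k:ℝ)+1)/((k:ℝ)+2)) ^ t) := by
    apply Finset.prod_le_prod
    · intro k _; positivity
    · intro k _
      have h := term_upper ht0 ht1 ((k:ℝ)+1) (by positivity)
      have e1 : (k:ℝ)+1+1 = (k:ℝ)+2 := by ring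
      rwa [e1] at h
  rw [Real.finset_prod_rpow _ _ (fun k _ => by positivity) t, telescope_prod] at h1
  refine h1.trans ?_
  have hn1 : (1:ℝ) ≤ (n:ℝ) := by exact_mod_cast hn
  have h2 : (1:ℝ)/((n:ℝ)+1) ≤ 1/(n:ℝ) := by
    apply one_div_le_one_div_of_le (by linarith) (by linarith)
  calc (1/((n:ℝ)+1))^t ≤ (1/(n:ℝ))^t :=
        Real.rpow_le_rpow (by positivity) h2 ht0
    _ = ((n:ℝ)⁻¹)^t := by rw [one_div]
    _ = ((n:ℝ)^t)⁻¹ := Real.inv_rpow (by positivity) t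
    _ = (n:ℝ)^(-t) := (Real.rpow_neg (by positivity) t).symm

lemma prod_lower {t : ℝ} (ht0 : 0 ≤ t) (ht1 : t ≤ 1) (n : ℕ) (hn : 1 ≤ n) :
    1/(1+t) * (n:ℝ)^(-t) ≤ ∏ k ∈ range n, (((k:ℝ)+1)/((k:ℝ)+1+t)) := by
  obtain ⟨m, rfl⟩ : ∃ m, n = m + 1 := ⟨n-1, (Nat.succ_pred_eq_of_pos hn).symm⟩
  rw [Finset.prod_range_succ']
  have hf0 : (((0:ℕ):ℝ)+1)/(((0:ℕ):ℝ)+1+t) = 1/(1+t) := by norm_num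
  rw [hf0]
  have key : ((m:ℝ)+1)^(-t) ≤ ∏ k ∈ range m, ((((k+1:ℕ)):ℝ)+1)/((((k+1:ℕ)):ℝ)+1+t) := by
    have h1 : ∏ k ∈ range m, ((((k:ℝ)+1)/((k:ℝ)+2)) ^ t)
        ≤ ∏ k ∈ range m, ((((k+1:ℕ)):ℝ)+1)/((((k+1:ℕ)):ℝ)+1+t) := by
      apply Finset.prod_le_prod
      · intro k _; positivity
      · intro k _
        have h := term_lower ht0 ht1 ((k:ℝ)+1) (by positivity)
        have e1 : (k:ℝ)+1+1 = (k:ℝ)+2 := by ring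
        rw [e1] at h
        refine le_trans ?_ (h.trans ?_)
        · exact le_of_eq rfl
        · push_cast; ring_nf; exact le_of_eq rfl
    rw [Real.finset_prod_rpow _ _ (fun k _ => by positivity) t, telescope_prod] at h1
    refine le_trans ?_ h1
    rw [Real.rpow_neg (by positivity), ← Real.inv_rpow (by positivity), ← one_div]
  calc 1/(1+t) * ((m+1:ℕ):ℝ)^(-t)
      = ((m:ℝ)+1)^(-t) * (1/(1+t)) := by push_cast; ring
    _ ≤ (∏ k ∈ range m, ((((k+1:ℕ)):ℝ)+1)/((((k+1:ℕ)):ℝ)+1+t)) * (1/(1+t)) := by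
        apply mul_le_mul_of_nonneg_right key (by positivity)

/-- The RVQ expected squared angular distortion `2^B Β(2^B, p/(p-1))`, with `p = N_t ≥ 2`
and `B ≥ 0` the number of feedback bits, is bounded as
`((p-1)/p) 2^{-B/(p-1)} ≤ 2^B Β(2^B, p/(p-1)) ≤ 2^{-B/(p-1)}`,
where `Β(x,y) = Γ(x)Γ(y)/Γ(x+y)` is the Beta function. -/
theorem rvq_distortion_bounds (p B : ℕ) (hp : 2 ≤ p) :
    ((p : ℝ) - 1) / p * (2 : ℝ) ^ (-(B : ℝ) / ((p : ℝ) - 1))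
        ≤ (2 : ℝ) ^ B *
            (Gamma ((2 : ℝ) ^ B) * Gamma ((p : ℝ) / ((p : ℝ) - 1))
              / Gamma ((2 : ℝ) ^ B + (p : ℝ) / ((p : ℝ) - 1)))
      ∧ (2 : ℝ) ^ B *
            (Gamma ((2 : ℝ) ^ B) * Gamma ((p : ℝ) / ((p : ℝ) - 1))
              / Gamma ((2 : ℝ) ^ B + (p : ℝ) / ((p : ℝ) - 1)))
          ≤ (2 : ℝ) ^ (-(B : ℝ) / ((p : ℝ) - 1)) := by
  have hp2 : (2:ℝ) ≤ (p:ℝ) := by exact_mod_cast hp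
  have hp1 : (1:ℝ) ≤ (p:ℝ) - 1 := by linarith
  have hp0 : (0:ℝ) < (p:ℝ) - 1 := by linarith
  set t : ℝ := 1/((p:ℝ)-1) with ht
  have ht0 : 0 < t := by positivity
  have ht1 : t ≤ 1 := by rw [ht]; rw [div_le_one hp0]; linarith
  have hs : (p:ℝ)/((p:ℝ)-1) = 1 + t := by rw [ht]; field_simp; ring
  set n : ℕ := 2^B with hn
  have hn1 : 1 ≤ n := Nat.one_le_two_pow
  have hcast : (2:ℝ)^B = (n:ℝ) := by rw [hn]; push_cast; ring
  obtain ⟨m, hm⟩ : ∃ m, n = m + 1 := ⟨n-1, (Nat.succ_pred_eq_of_pos hn1).symm⟩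
  -- Gamma values
  have hGn : Real.Gamma ((n:ℝ)) = (Nat.factorial m : ℝ) := by
    rw [hm]; push_cast; exact Real.Gamma_nat_eq_factorial m
  have hst : (0:ℝ) < 1 + t := by linarith
  have hGs : 0 < Real.Gamma (1+t) := Real.Gamma_pos_of_pos hst
  have hGsum : Real.Gamma ((n:ℝ) + (1+t)) = Real.Gamma (1+t) * ∏ k ∈ range n, ((1+t) + k) := by
    rw [add_comm]; exact gamma_add_nat_prod _ hst n
  have hprodpos : 0 < ∏ k ∈ range n, ((1+t) + (k:ℝ)) :=
    Finset.prod_pos (fun k _ => by positivity)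
  -- main identity
  have hE : (2:ℝ)^B * (Real.Gamma ((2:ℝ)^B) * Real.Gamma ((p:ℝ)/((p:ℝ)-1))
        / Real.Gamma ((2:ℝ)^B + (p:ℝ)/((p:ℝ)-1)))
      = ∏ k ∈ range n, (((k:ℝ)+1)/((k:ℝ)+1+t)) := by
    rw [hs, hcast, hGn, hGsum]
    have hdenom : ∏ k ∈ range n, ((1+t) + (k:ℝ)) = ∏ k ∈ range n, ((k:ℝ)+1+t) :=
      Finset.prod_congr rfl (fun k _ => by ring)
    have hnum : ∏ k ∈ range n, ((k:ℝ)+1) = (n:ℝ) * (Nat.factorial m : ℝ) := by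
      have h := Finset.prod_range_add_one_eq_factorial n
      have h2 : ((∏ x ∈ range n, (x+1) : ℕ) : ℝ) = ∏ k ∈ range n, ((k:ℝ)+1) := by
        push_cast; rfl
      rw [← h2, h, hm, Nat.factorial_succ]; push_cast; ring
    rw [Finset.prod_div_distrib, hnum, ← hdenom]
    field_simp
  -- exponent identity
  have hexp : (2:ℝ) ^ (-(B:ℝ)/((p:ℝ)-1)) = (n:ℝ)^(-t) := by
    rw [← hcast, ← Real.rpow_natCast (2:ℝ) B, ← Real.rpow_mul (by norm_num)]
    congr 1
    rw [ht]; field_simp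
  have hconst : ((p:ℝ)-1)/(p:ℝ) = 1/(1+t) := by
    rw [ht]; field_simp; ring
  rw [hE, hexp, hconst]
  exact ⟨prod_lower ht0.le ht1 n hn1, prod_upper ht0.le ht1 n hn1⟩
end

section
/- The ergodic capacity of a maximal-ratio beamforming system with N_t transmit antennas over i.i.d. Rayleigh fading satisfies E[log₂(1 + P‖h‖²)] = log₂(e) · e^{1/P} · Σ_{k=0}^{N_t-1} Γ(-k, 1/P)/P^k, where h ∈ ℂ^{N_t} is standard complex Gaussian (so ‖h‖² is Gamma(N_t,1)-distributed) and Γ(α,x) = ∫_x^∞ t^{α-1} e^{-t} dt is the upper incomplete gamma function. -/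
open MeasureTheory ProbabilityTheory Real Set Filter Topology
open scoped ProbabilityTheory ENNReal NNReal


lemma exp_integrableOn (a : ℝ) : IntegrableOn (fun t => Real.exp (-t)) (Ioi a) := by
  simpa using exp_neg_integrableOn_Ioi a one_pos

lemma zpow_exp_meas (k : ℤ) : Measurable (fun t : ℝ => t ^ k * Real.exp (-t)) := by fun_prop

lemma zpow_anti {a t : ℝ} (ha : 0 < a) (hta : a ≤ t) (k : ℕ) :
    t ^ (-(k:ℤ) - 1) ≤ a ^ (-(k:ℤ) - 1) := by
  have he : (-(k:ℤ) - 1) = -((k+1 : ℕ) : ℤ) := by push_cast; ring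
  rw [he, zpow_neg, zpow_neg, zpow_natCast, zpow_natCast]
  exact inv_anti₀ (pow_pos ha _) (pow_le_pow_left₀ ha.le hta _)

lemma zpow_exp_integrable (k : ℕ) {a : ℝ} (ha : 0 < a) :
    IntegrableOn (fun t => t ^ (-(k:ℤ) - 1) * Real.exp (-t)) (Ioi a) := by
  refine Integrable.mono' ((exp_integrableOn a).const_mul (a ^ (-(k:ℤ) - 1))) ?_ ?_
  · exact (zpow_exp_meas _).aestronglyMeasurable
  · filter_upwards [ae_restrict_mem measurableSet_Ioi] with t ht
    have ht0 : 0 < t := lt_trans ha ht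
    rw [Real.norm_eq_abs, abs_mul, abs_of_pos (zpow_pos ht0 _), abs_of_pos (Real.exp_pos _)]
    gcongr
    exact zpow_anti ha ht.le k

lemma zpow_exp_integrable' (k : ℕ) {a : ℝ} (ha : 0 < a) :
    IntegrableOn (fun t => t ^ (-(k:ℤ) - 2) * Real.exp (-t)) (Ioi a) := by
  have := zpow_exp_integrable (k+1) ha
  convert this using 3 with t
  push_cast; ring_nf

lemma gammaNeg_rec (k : ℕ) {a : ℝ} (ha : 0 < a) :
    ∫ t in Ioi a, t ^ (-(k:ℤ) - 2) * Real.exp (-t)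
      = ((k:ℝ)+1)⁻¹ * (a ^ (-(k:ℤ) - 1) * Real.exp (-a))
        - ((k:ℝ)+1)⁻¹ * ∫ t in Ioi a, t ^ (-(k:ℤ) - 1) * Real.exp (-t) := by
  set c : ℝ := ((k:ℝ)+1)⁻¹ with hc
  have hderiv : ∀ t ∈ Ici a, HasDerivAt (fun t : ℝ => -(c * (t ^ (-(k:ℤ) - 1) * Real.exp (-t))))
      (t ^ (-(k:ℤ) - 2) * Real.exp (-t) + c * (t ^ (-(k:ℤ) - 1) * Real.exp (-t))) t := by
    intro t ht
    have ht0 : (0:ℝ) < t := lt_of_lt_of_le ha ht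
    have h1 : HasDerivAt (fun t : ℝ => t ^ (-(k:ℤ) - 1)) ((-(k:ℝ) - 1) * t ^ (-(k:ℤ) - 2)) t := by
      have := hasDerivAt_zpow (-(k:ℤ) - 1) t (Or.inl ht0.ne')
      rw [show (-(k:ℤ) - 2) = -(k:ℤ) - 1 - 1 by ring]
      exact this.congr_deriv (by push_cast; ring)
    have h2 : HasDerivAt (fun t : ℝ => Real.exp (-t)) (-Real.exp (-t)) t := by
      simpa using (hasDerivAt_neg t).exp
    have := ((h1.mul h2).const_mul (-c))
    have hck : c * ((k:ℝ)+1) = 1 := by rw [hc]; exact inv_mul_cancel₀ (by positivity)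
    refine (this.congr_deriv ?_).congr_of_eventuallyEq (Filter.Eventually.of_forall fun s => ?_)
    · linear_combination (t ^ (-(k:ℤ) - 2) * Real.exp (-t)) * hck
    · simp only [Pi.mul_apply]; ring
  have hint : IntegrableOn (fun t => t ^ (-(k:ℤ) - 2) * Real.exp (-t)
      + c * (t ^ (-(k:ℤ) - 1) * Real.exp (-t))) (Ioi a) :=
    (zpow_exp_integrable' k ha).add ((zpow_exp_integrable k ha).const_mul c)
  have hlim : Tendsto (fun t : ℝ => -(c * (t ^ (-(k:ℤ) - 1) * Real.exp (-t)))) atTop (𝓝 0) := by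
    have h1 : Tendsto (fun t : ℝ => t ^ (-(k:ℤ) - 1)) atTop (𝓝 0) :=
      tendsto_zpow_atTop_zero (by omega)
    have h2 : Tendsto (fun t : ℝ => Real.exp (-t)) atTop (𝓝 0) := by
      simpa using Real.tendsto_exp_neg_atTop_nhds_zero
    have := ((h1.mul h2).const_mul c).neg
    simpa using this
  have key := integral_Ioi_of_hasDerivAt_of_tendsto' hderiv hint hlim
  rw [integral_add (zpow_exp_integrable' k ha) ((zpow_exp_integrable k ha).const_mul c),
    MeasureTheory.integral_const_mul] at key
  have : (0:ℝ) - -(c * (a ^ (-(k:ℤ) - 1) * Real.exp (-a))) = c * (a ^ (-(k:ℤ) - 1) * Real.exp (-a)) := by ring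
  rw [this] at key
  linarith [key]

lemma gamma_int (k : ℕ) : ∫ x in Ioi (0:ℝ), x ^ k * Real.exp (-x) = k.factorial := by
  have h := Real.Gamma_eq_integral (by positivity : (0:ℝ) < k + 1)
  rw [Real.Gamma_nat_eq_factorial] at h
  rw [h, show ((k:ℝ) + 1 - 1) = (k:ℝ) by ring]
  refine setIntegral_congr_fun measurableSet_Ioi (fun x hx => ?_)
  rw [Real.rpow_natCast, mul_comm]

lemma gamma_integrable (k : ℕ) : IntegrableOn (fun x => x ^ k * Real.exp (-x)) (Ioi (0:ℝ)) := by
  have h := Real.GammaIntegral_convergent (by positivity : (0:ℝ) < (k:ℝ) + 1)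
  refine (h.congr_fun (fun x hx => ?_) measurableSet_Ioi)
  rw [show ((k:ℝ) + 1 - 1) = (k:ℝ) by ring]; beta_reduce; rw [Real.rpow_natCast, mul_comm]

lemma transl_int (a : ℝ) (f : ℝ → ℝ) : ∫ u in Ioi (0:ℝ), f (u + a) = ∫ t in Ioi a, f t := by
  have := MeasurePreserving.setIntegral_preimage_emb
    (measurePreserving_add_right volume a) (measurableEmbedding_addRight a) f (Ioi a)
  simpa using this

lemma transl_integrable_iff (a : ℝ) (f : ℝ → ℝ) :
    IntegrableOn (fun u => f (u + a)) (Ioi (0:ℝ)) ↔ IntegrableOn f (Ioi a) := by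
  have h := (measurePreserving_add_right volume a).integrableOn_comp_preimage
    (measurableEmbedding_addRight a) (f := f) (s := Ioi a)
  have he : (fun x => x + a) ⁻¹' Ioi a = Ioi (0:ℝ) := by ext x; simp
  rw [he] at h
  exact h

lemma shifted_gamma_integrable (k : ℕ) (a : ℝ) :
    IntegrableOn (fun t => (t - a) ^ k * Real.exp (-t)) (Ioi a) := by
  rw [← transl_integrable_iff]
  have : (fun u : ℝ => (u + a - a) ^ k * Real.exp (-(u + a)))
      = fun u => Real.exp (-a) * (u ^ k * Real.exp (-u)) := by
    ext u; rw [show -(u+a) = -a + -u by ring, Real.exp_add]; ring_nf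
  rw [show (fun u : ℝ => (u + a - a) ^ k * Real.exp (-(u+a))) = _ from this]
  exact (gamma_integrable k).const_mul _

lemma shifted_gamma_int (k : ℕ) (a : ℝ) :
    ∫ t in Ioi a, (t - a) ^ k * Real.exp (-t) = Real.exp (-a) * k.factorial := by
  rw [← transl_int a (fun t => (t - a) ^ k * Real.exp (-t))]
  have : ∀ u : ℝ, (u + a - a) ^ k * Real.exp (-(u + a))
      = Real.exp (-a) * (u ^ k * Real.exp (-u)) := by
    intro u; rw [show -(u+a) = -a + -u by ring, Real.exp_add]; ring_nf
  simp_rw [this]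
  rw [MeasureTheory.integral_const_mul, gamma_int]

lemma B_integrable (k : ℕ) {a : ℝ} (ha : 0 < a) :
    IntegrableOn (fun t => (t - a) ^ k / t * Real.exp (-t)) (Ioi a) := by
  refine Integrable.mono' ((shifted_gamma_integrable k a).const_mul a⁻¹) ?_ ?_
  · apply Measurable.aestronglyMeasurable; fun_prop
  · filter_upwards [ae_restrict_mem measurableSet_Ioi] with t ht
    have ht0 : (0:ℝ) < t := lt_trans ha ht
    have htka : (0:ℝ) ≤ (t - a) ^ k := pow_nonneg (by linarith [mem_Ioi.mp ht]) k
    rw [Real.norm_eq_abs, abs_mul, abs_div, abs_of_nonneg htka, abs_of_pos ht0,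
      abs_of_pos (Real.exp_pos _)]
    have h1 : (t - a) ^ k / t * Real.exp (-t) ≤ (t - a) ^ k / a * Real.exp (-t) := by
      gcongr
      exact ht.le
    calc (t - a) ^ k / t * Real.exp (-t) ≤ (t - a) ^ k / a * Real.exp (-t) := h1
      _ = a⁻¹ * ((t - a) ^ k * Real.exp (-t)) := by ring

lemma B_closed (k : ℕ) {a : ℝ} (ha : 0 < a) :
    ∫ t in Ioi a, (t - a) ^ k / t * Real.exp (-t)
      = (k.factorial : ℝ) * a ^ k * ∫ t in Ioi a, t ^ (-(k:ℤ) - 1) * Real.exp (-t) := by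
  induction k with
  | zero =>
      simp only [pow_zero, Nat.factorial_zero, Nat.cast_one, one_mul, Nat.cast_zero, neg_zero,
        zero_sub, CharP.cast_eq_zero]
      refine setIntegral_congr_fun measurableSet_Ioi (fun t ht => ?_)
      rw [zpow_neg_one, one_div]
  | succ k ih =>
      have hsplit : ∫ t in Ioi a, (t - a) ^ (k+1) / t * Real.exp (-t)
          = (∫ t in Ioi a, (t - a) ^ k * Real.exp (-t))
            - a * ∫ t in Ioi a, (t - a) ^ k / t * Real.exp (-t) := by
        rw [← MeasureTheory.integral_const_mul, ← integral_sub (shifted_gamma_integrable k a)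
          (((B_integrable k ha)).const_mul a)]
        refine setIntegral_congr_fun measurableSet_Ioi (fun t ht => ?_)
        have ht0 : t ≠ 0 := ne_of_gt (lt_trans ha ht)
        field_simp
        ring
      rw [hsplit, shifted_gamma_int, ih]
      have hrec := gammaNeg_rec k ha
      have hcast : (-( ((k:ℕ)+1 : ℕ) : ℤ) - 1) = (-(k:ℤ) - 2) := by push_cast; ring
      rw [hcast, hrec]
      have hzp : (a:ℝ) ^ (k+1) * a ^ (-(k:ℤ) - 1) = 1 := by
        rw [show (-(k:ℤ) - 1) = -((k+1 : ℕ) : ℤ) by push_cast; ring, zpow_neg, zpow_natCast]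
        field_simp
      push_cast [Nat.factorial_succ]
      have h2 : ((k:ℝ) + 1) * (k.factorial) * a ^ (k+1) *
          (((k:ℝ)+1)⁻¹ * (a ^ (-(k:ℤ) - 1) * Real.exp (-a))
            - ((k:ℝ)+1)⁻¹ * ∫ t in Ioi a, t ^ (-(k:ℤ) - 1) * Real.exp (-t))
          = (k.factorial) * (a ^ (k+1) * a ^ (-(k:ℤ) - 1)) * Real.exp (-a)
            - a * ((k.factorial) * a ^ k * ∫ t in Ioi a, t ^ (-(k:ℤ) - 1) * Real.exp (-t)) := by
        have hk1 : ((k:ℝ) + 1) ≠ 0 := by positivity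
        field_simp
        ring
      rw [h2, hzp]
      ring


lemma T_fun_eq (k : ℕ) {P : ℝ} (hP : 0 < P) (u : ℝ) (hu : 0 ≤ u) :
    P * u ^ k / (1 + P * u) * Real.exp (-u)
      = Real.exp (1/P) * ((u + 1/P - 1/P) ^ k / (u + 1/P) * Real.exp (-(u + 1/P))) := by
  have h1 : (1 + P * u) = P * (u + 1/P) := by field_simp; ring
  have h2 : Real.exp (-(u + 1/P)) = Real.exp (-(1/P)) * Real.exp (-u) := by
    rw [← Real.exp_add]; ring_nf
  rw [h1, h2]
  have hup : u + 1/P > 0 := by positivity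
  rw [Real.exp_neg (1/P)]
  field_simp
  rw [add_sub_cancel_right, mul_div_cancel_left₀ _ hP.ne']

lemma T_integrable (k : ℕ) {P : ℝ} (hP : 0 < P) :
    IntegrableOn (fun u => P * u ^ k / (1 + P * u) * Real.exp (-u)) (Ioi 0) := by
  have ha : (0:ℝ) < 1/P := by positivity
  have h := ((B_integrable k ha).const_mul (Real.exp (1/P)))
  have h2 := (transl_integrable_iff (1/P)
    (fun t => Real.exp (1/P) * ((t - 1/P) ^ k / t * Real.exp (-t)))).mpr h
  refine h2.congr_fun (fun u hu => ?_) measurableSet_Ioi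
  exact (T_fun_eq k hP u (le_of_lt hu)).symm

lemma T_eq (k : ℕ) {P : ℝ} (hP : 0 < P) :
    ∫ u in Ioi (0:ℝ), P * u ^ k / (1 + P * u) * Real.exp (-u)
      = Real.exp (1/P) * ((k.factorial : ℝ) * (1/P) ^ k *
          ∫ t in Ioi (1/P), t ^ (-(k:ℤ) - 1) * Real.exp (-t)) := by
  have ha : (0:ℝ) < 1/P := by positivity
  rw [← B_closed k ha, ← MeasureTheory.integral_const_mul,
    ← transl_int (1/P) (fun t => Real.exp (1/P) * ((t - 1/P) ^ k / t * Real.exp (-t)))]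
  refine setIntegral_congr_fun measurableSet_Ioi (fun u hu => ?_)
  have := T_fun_eq k hP u (le_of_lt hu)
  simpa using this


lemma log_le_lin {P x : ℝ} (hP : 0 < P) (hx : 0 ≤ x) :
    Real.log (1 + P * x) ≤ P * x := by
  have h1 : (0:ℝ) < 1 + P * x := by positivity
  have := Real.log_le_sub_one_of_pos h1
  linarith

lemma log_nonneg' {P x : ℝ} (hP : 0 < P) (hx : 0 ≤ x) : 0 ≤ Real.log (1 + P * x) :=
  Real.log_nonneg (by nlinarith)

lemma L_integrable (m : ℕ) {P : ℝ} (hP : 0 < P) :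
    IntegrableOn (fun x => Real.log (1 + P * x) * (x ^ m * Real.exp (-x))) (Ioi 0) := by
  refine Integrable.mono' ((gamma_integrable (m+1)).const_mul P) ?_ ?_
  · exact ((Real.measurable_log.comp (measurable_const.add (measurable_id.const_mul P))).mul
      ((measurable_id.pow_const m).mul (Real.measurable_exp.comp measurable_neg))).aestronglyMeasurable
  · filter_upwards [ae_restrict_mem measurableSet_Ioi] with x hx
    have hx0 : (0:ℝ) < x := hx
    rw [Real.norm_eq_abs, abs_mul, abs_of_nonneg (log_nonneg' hP hx0.le),
      abs_of_nonneg (by positivity)]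
    calc Real.log (1 + P * x) * (x ^ m * Real.exp (-x))
        ≤ (P * x) * (x ^ m * Real.exp (-x)) := by
          apply mul_le_mul_of_nonneg_right (log_le_lin hP hx0.le) (by positivity)
      _ = P * (x ^ (m+1) * Real.exp (-x)) := by ring

-- integration by parts on (0, ∞)
lemma ibp (m : ℕ) {P : ℝ} (hP : 0 < P) :
    ∫ x in Ioi (0:ℝ), Real.log (1 + P * x) * (x ^ m * Real.exp (-x))
      = (m:ℝ) * (∫ x in Ioi (0:ℝ), Real.log (1 + P * x) * (x ^ (m-1) * Real.exp (-x)))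
        + ∫ x in Ioi (0:ℝ), P * x ^ m / (1 + P * x) * Real.exp (-x) := by
  set F : ℝ → ℝ := fun x => Real.log (1 + P * x) * (x ^ m * Real.exp (-x)) with hF
  set F' : ℝ → ℝ := fun x => P * x ^ m / (1 + P * x) * Real.exp (-x)
      + Real.log (1 + P * x) * ((m:ℝ) * x ^ (m-1) * Real.exp (-x) - x ^ m * Real.exp (-x))
    with hF'
  have hderiv : ∀ x ∈ Ici (0:ℝ), HasDerivAt F (F' x) x := by
    intro x hx
    have hx0 : (0:ℝ) ≤ x := hx
    have h1x : (0:ℝ) < 1 + P * x := by positivity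
    have hlog : HasDerivAt (fun x : ℝ => Real.log (1 + P * x)) (P / (1 + P * x)) x := by
      have hin : HasDerivAt (fun x : ℝ => 1 + P * x) P x := by
        simpa using ((hasDerivAt_id x).const_mul P).const_add 1
      have h := (Real.hasDerivAt_log h1x.ne').comp x hin
      simpa [Function.comp_def, div_eq_inv_mul] using h
    have hpow : HasDerivAt (fun x : ℝ => x ^ m) ((m:ℝ) * x ^ (m-1)) x := hasDerivAt_pow m x
    have hexp : HasDerivAt (fun x : ℝ => Real.exp (-x)) (-Real.exp (-x)) x := by
      simpa using (hasDerivAt_neg x).exp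
    have := hlog.mul (hpow.mul hexp)
    refine (this.congr_deriv ?_).congr_of_eventuallyEq (Filter.Eventually.of_forall fun s => ?_)
    · simp only [hF', Pi.mul_apply]; ring
    · rfl
  have hint : IntegrableOn F' (Ioi 0) := by
    rw [hF']
    apply (T_integrable m hP).add
    have : (fun x => Real.log (1 + P * x) * ((m:ℝ) * x ^ (m-1) * Real.exp (-x) - x ^ m * Real.exp (-x)))
        = fun x => (m:ℝ) * (Real.log (1 + P * x) * (x ^ (m-1) * Real.exp (-x)))
          - Real.log (1 + P * x) * (x ^ m * Real.exp (-x)) := by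
      ext x; ring
    rw [this]
    exact ((L_integrable (m-1) hP).const_mul _).sub (L_integrable m hP)
  have hlim : Tendsto F atTop (𝓝 0) := by
    have hbound : ∀ᶠ x in atTop, ‖F x‖ ≤ P * (x ^ (m+2) * Real.exp (-x)) := by
      filter_upwards [eventually_ge_atTop (1:ℝ)] with x hx1
      have hx0 : (0:ℝ) ≤ x := by linarith
      rw [hF, Real.norm_eq_abs, abs_mul, abs_of_nonneg (log_nonneg' hP hx0),
        abs_of_nonneg (by positivity)]
      calc Real.log (1 + P * x) * (x ^ m * Real.exp (-x))
          ≤ (P * x) * (x ^ m * Real.exp (-x)) :=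
            mul_le_mul_of_nonneg_right (log_le_lin hP hx0) (by positivity)
        _ = P * (x ^ (m+1) * Real.exp (-x)) := by ring
        _ ≤ P * (x ^ (m+2) * Real.exp (-x)) := by
            have hpp : x ^ (m+1) ≤ x ^ (m+2) := pow_le_pow_right₀ hx1 (by omega)
            exact mul_le_mul_of_nonneg_left
              (mul_le_mul_of_nonneg_right hpp (Real.exp_pos _).le) hP.le
    have h0 : Tendsto (fun x : ℝ => P * (x ^ (m+2) * Real.exp (-x))) atTop (𝓝 0) := by
      simpa using (tendsto_pow_mul_exp_neg_atTop_nhds_zero (m+2)).const_mul P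
    exact squeeze_zero_norm' hbound h0
  have key := integral_Ioi_of_hasDerivAt_of_tendsto' hderiv hint hlim
  have hF0 : F 0 = 0 := by simp [hF]
  rw [hF0, sub_zero] at key
  rw [hF'] at key
  rw [integral_add (T_integrable m hP) ?hi] at key
  case hi =>
    have : (fun x => Real.log (1 + P * x) * ((m:ℝ) * x ^ (m-1) * Real.exp (-x) - x ^ m * Real.exp (-x)))
        = fun x => (m:ℝ) * (Real.log (1 + P * x) * (x ^ (m-1) * Real.exp (-x)))
          - Real.log (1 + P * x) * (x ^ m * Real.exp (-x)) := by
      ext x; ring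
    rw [this]
    exact ((L_integrable (m-1) hP).const_mul _).sub (L_integrable m hP)
  have hsplit : ∫ x in Ioi (0:ℝ), Real.log (1 + P * x) * ((m:ℝ) * x ^ (m-1) * Real.exp (-x) - x ^ m * Real.exp (-x))
      = (m:ℝ) * (∫ x in Ioi (0:ℝ), Real.log (1 + P * x) * (x ^ (m-1) * Real.exp (-x)))
        - ∫ x in Ioi (0:ℝ), Real.log (1 + P * x) * (x ^ m * Real.exp (-x)) := by
    rw [← MeasureTheory.integral_const_mul, ← integral_sub ((L_integrable (m-1) hP).const_mul _) (L_integrable m hP)]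
    refine setIntegral_congr_fun measurableSet_Ioi (fun x hx => ?_)
    ring
  rw [hsplit] at key
  linarith [key]


lemma Jsum (m : ℕ) {P : ℝ} (hP : 0 < P) :
    ∫ x in Ioi (0:ℝ), Real.log (1 + P * x) * (x ^ m * Real.exp (-x))
      = (m.factorial : ℝ) * ∑ k ∈ Finset.range (m+1),
          (∫ x in Ioi (0:ℝ), P * x ^ k / (1 + P * x) * Real.exp (-x)) / k.factorial := by
  induction m with
  | zero => simpa using ibp 0 hP
  | succ m ih =>
      rw [ibp (m+1) hP]
      simp only [Nat.add_sub_cancel] at *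
      rw [ih, Finset.sum_range_succ (n := m+1)]
      have hfac : ((m+1).factorial : ℝ) = (m+1) * m.factorial := by
        rw [Nat.factorial_succ]; push_cast; ring
      rw [hfac]
      have hne : ((m+1:ℕ).factorial : ℝ) ≠ 0 := Nat.cast_ne_zero.mpr (Nat.factorial_ne_zero _)
      rw [mul_add]
      congr 1
      · push_cast; ring
      · rw [← hfac, mul_div_cancel₀ _ hne]

/-- The upper incomplete gamma function `Γ(-k, x) = ∫_x^∞ t^{-k-1} e^{-t} dt`
for a nonnegative integer `k` and `x > 0`. -/
noncomputable def upperIncGammaNegInt (k : ℕ) (x : ℝ) : ℝ :=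
  ∫ t in Ioi x, t ^ (-(k : ℤ) - 1) * Real.exp (-t)

/-- Ergodic capacity of eigen-beamforming over i.i.d. Rayleigh fading:
if `G = ‖h‖² ~ Gamma(N_t, 1)` then
`E[log₂(1 + P G)] = log₂(e) e^{1/P} ∑_{k=0}^{N_t-1} Γ(-k, 1/P)/P^k`. -/
theorem bf_ergodic_capacity
    {Ω : Type*} [MeasureSpace Ω] [IsProbabilityMeasure (ℙ : Measure Ω)]
    (Nt : ℕ) (hNt : 1 ≤ Nt) (P : ℝ) (hP : 0 < P)
    (G : Ω → ℝ)
    (hG : Measure.map G ℙ = volume.withDensity (fun x =>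
        ENNReal.ofReal (if 0 ≤ x then
          x ^ (Nt - 1) * Real.exp (-x) / (Nat.factorial (Nt - 1)) else 0))) :
    ∫ ω, logb 2 (1 + P * G ω) ∂ℙ
      = logb 2 (Real.exp 1) * Real.exp (1 / P) *
          ∑ k ∈ Finset.range Nt, upperIncGammaNegInt k (1 / P) / P ^ k := by
  set m : ℕ := Nt - 1 with hm
  set r : ℝ → ℝ := fun x => if 0 ≤ x then x ^ m * Real.exp (-x) / (Nat.factorial m) else 0
    with hr
  have hrm : Measurable r := by
    apply Measurable.ite measurableSet_Ici
    · fun_prop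
    · exact measurable_const
  have hrnn : ∀ x, 0 ≤ r x := by
    intro x; rw [hr]; dsimp only
    split
    · positivity
    · exact le_refl 0
  -- G is AEMeasurable
  have hGm : AEMeasurable G ℙ := by
    by_contra h
    rw [Measure.map_of_not_aemeasurable h] at hG
    have h2 := congrArg (fun μ : Measure ℝ => μ (Ioc (1:ℝ) 2)) hG
    simp only [Measure.coe_zero, Pi.zero_apply] at h2
    rw [withDensity_apply _ measurableSet_Ioc] at h2
    have hpos : 0 < ∫⁻ x in Ioc (1:ℝ) 2, ENNReal.ofReal (r x) := by
      have hb : ∀ x ∈ Ioc (1:ℝ) 2, ENNReal.ofReal (Real.exp (-2) / (Nat.factorial m))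
          ≤ ENNReal.ofReal (r x) := by
        intro x hx
        apply ENNReal.ofReal_le_ofReal
        rw [hr]; dsimp only
        rw [if_pos (by linarith [hx.1] : (0:ℝ) ≤ x)]
        have h3 : (1:ℝ) ≤ x ^ m := one_le_pow₀ hx.1.le
        have h1 : Real.exp (-2) ≤ x ^ m * Real.exp (-x) := by
          have h2 : Real.exp (-2) ≤ Real.exp (-x) := Real.exp_le_exp.mpr (by linarith [hx.2])
          nlinarith [Real.exp_pos (-x)]
        gcongr
      calc (0:ℝ≥0∞) < ENNReal.ofReal (Real.exp (-2) / (Nat.factorial m)) * volume (Ioc (1:ℝ) 2) := by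
            rw [Real.volume_Ioc]
            exact ENNReal.mul_pos (ENNReal.ofReal_pos.mpr (by positivity)).ne' (by norm_num)
        _ = ∫⁻ _ in Ioc (1:ℝ) 2, ENNReal.ofReal (Real.exp (-2) / (Nat.factorial m)) := by
            rw [setLIntegral_const]
        _ ≤ _ := setLIntegral_mono (by fun_prop) hb
    exact absurd h2.symm hpos.ne'
  have hfm : Measurable (fun x : ℝ => Real.logb 2 (1 + P * x)) := by
    simp only [Real.logb]
    exact (Real.measurable_log.comp (measurable_const.add (measurable_id.const_mul P))).div_const _
  have step1 : ∫ ω, logb 2 (1 + P * G ω) ∂ℙ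
      = ∫ x, logb 2 (1 + P * x) ∂(Measure.map G ℙ) :=
    (integral_map hGm hfm.aestronglyMeasurable).symm
  rw [step1, hG]
  have hdens : (fun x => ENNReal.ofReal (if 0 ≤ x then
      x ^ (Nt - 1) * Real.exp (-x) / (Nat.factorial (Nt - 1)) else 0))
      = fun x => ((r x).toNNReal : ℝ≥0∞) := rfl
  rw [hdens]
  rw [integral_withDensity_eq_integral_smul (by measurability) (fun x => logb 2 (1 + P * x))]
  have hsmul : (fun x => (r x).toNNReal • logb 2 (1 + P * x))
      = fun x => r x * logb 2 (1 + P * x) := by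
    ext x
    rw [NNReal.smul_def, Real.coe_toNNReal _ (hrnn x), smul_eq_mul]
  rw [hsmul]
  have hind : (fun x => r x * logb 2 (1 + P * x))
      = Set.indicator (Ici 0) (fun x => r x * logb 2 (1 + P * x)) := by
    ext x
    by_cases hx : (0:ℝ) ≤ x
    · exact (Set.indicator_of_mem (mem_Ici.mpr hx) (fun x => r x * logb 2 (1 + P * x))).symm
    · rw [Set.indicator_of_notMem (by simpa using hx), hr]
      dsimp only
      rw [if_neg hx, zero_mul]
  rw [hind, integral_indicator measurableSet_Ici, integral_Ici_eq_integral_Ioi]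
  have hlog2 : Real.log 2 ≠ 0 := by
    have := Real.log_pos (by norm_num : (1:ℝ) < 2); linarith
  have hcongr : ∫ x in Ioi (0:ℝ), r x * logb 2 (1 + P * x)
      = ((Nat.factorial m : ℝ) * Real.log 2)⁻¹
        * ∫ x in Ioi (0:ℝ), Real.log (1 + P * x) * (x ^ m * Real.exp (-x)) := by
    rw [← MeasureTheory.integral_const_mul]
    refine setIntegral_congr_fun measurableSet_Ioi (fun x hx => ?_)
    rw [hr]; dsimp only
    rw [if_pos (le_of_lt hx), Real.logb]
    have hfne : (Nat.factorial m : ℝ) ≠ 0 := Nat.cast_ne_zero.mpr (Nat.factorial_ne_zero _)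
    field_simp
  rw [hcongr, Jsum m hP]
  have hmn : m + 1 = Nt := by omega
  rw [hmn]
  have hterm : ∀ k ∈ Finset.range Nt,
      (∫ x in Ioi (0:ℝ), P * x ^ k / (1 + P * x) * Real.exp (-x)) / (Nat.factorial k : ℝ)
        = Real.exp (1/P) * (upperIncGammaNegInt k (1/P) / P ^ k) := by
    intro k _
    rw [T_eq k hP]
    have hfne : (Nat.factorial k : ℝ) ≠ 0 := Nat.cast_ne_zero.mpr (Nat.factorial_ne_zero _)
    rw [upperIncGammaNegInt]
    rw [one_div, inv_pow]
    field_simp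
  rw [Finset.sum_congr rfl hterm]
  rw [Real.logb, Real.log_exp]
  rw [← Finset.mul_sum]
  have hfne : (Nat.factorial m : ℝ) ≠ 0 := Nat.cast_ne_zero.mpr (Nat.factorial_ne_zero _)
  field_simp
end

section
/- If γ is exponentially distributed with mean P/U (i.e., γ = (P/U)·Z with Z ~ Exp(1)), then E[log₂(1+γ)] = log₂(e) · e^{U/P} · E₁(U/P), where E₁ is the exponential integral of the first order. -/
open MeasureTheory ProbabilityTheory Real Set Filter
open scoped ProbabilityTheory

/-- The first-order exponential integral `E₁ z = ∫₁^∞ e^{-z t}/t dt`. -/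
noncomputable def expIntE1 (z : ℝ) : ℝ := ∫ t in Ioi (1 : ℝ), Real.exp (-z * t) / t

section aux
variable {c : ℝ}

lemma aux_bound (hc : 0 < c) {x : ℝ} (hx : 0 ≤ x) :
    Real.log (1 + x) * Real.exp (-c * x) ≤ (2 / c) * Real.exp (-(c / 2) * x) := by
  have h1 : Real.log (1 + x) ≤ x := by
    calc Real.log (1 + x) ≤ 1 + x - 1 := Real.log_le_sub_one_of_pos (by linarith)
    _ = x := by ring
  have h2 : x ≤ (2 / c) * Real.exp ((c / 2) * x) := by
    have := Real.add_one_le_exp ((c / 2) * x)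
    have h3 : (c / 2) * x ≤ Real.exp ((c / 2) * x) := by linarith
    calc x = (2 / c) * ((c / 2) * x) := by field_simp
    _ ≤ (2 / c) * Real.exp ((c / 2) * x) := by
        apply mul_le_mul_of_nonneg_left h3; positivity
  calc Real.log (1 + x) * Real.exp (-c * x) ≤ x * Real.exp (-c * x) := by
        apply mul_le_mul_of_nonneg_right h1 (Real.exp_nonneg _)
  _ ≤ ((2 / c) * Real.exp ((c / 2) * x)) * Real.exp (-c * x) := by
        apply mul_le_mul_of_nonneg_right h2 (Real.exp_nonneg _)
  _ = (2 / c) * Real.exp (-(c / 2) * x) := by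
        rw [mul_assoc, ← Real.exp_add]; ring_nf

lemma aux_int_g (hc : 0 < c) :
    IntegrableOn (fun x => Real.log (1 + x) * Real.exp (-c * x)) (Ioi (0:ℝ)) := by
  have hint : IntegrableOn (fun x => (2 / c) * Real.exp (-(c / 2) * x)) (Ioi (0:ℝ)) :=
    (exp_neg_integrableOn_Ioi 0 (by positivity : (0:ℝ) < c / 2)).const_mul _
  refine Integrable.mono hint ?_ ?_
  · apply Measurable.aestronglyMeasurable
    exact (Real.measurable_log.comp (measurable_const.add measurable_id)).mul
      (Real.measurable_exp.comp (measurable_id.const_mul _))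
  · filter_upwards [ae_restrict_mem measurableSet_Ioi] with x hx
    have hx0 : (0:ℝ) ≤ x := le_of_lt hx
    have hlog : 0 ≤ Real.log (1 + x) := Real.log_nonneg (by linarith)
    rw [Real.norm_eq_abs, Real.norm_eq_abs, abs_of_nonneg (by positivity),
      abs_of_nonneg (by positivity)]
    exact aux_bound hc hx0

lemma aux_int_h (hc : 0 < c) :
    IntegrableOn (fun x => Real.exp (-c * x) / (1 + x)) (Ioi (0:ℝ)) := by
  refine Integrable.mono (exp_neg_integrableOn_Ioi 0 hc) ?_ ?_
  · apply Measurable.aestronglyMeasurable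
    exact (Real.measurable_exp.comp (measurable_id.const_mul _)).div
      (measurable_const.add measurable_id)
  · filter_upwards [ae_restrict_mem measurableSet_Ioi] with x hx
    have hx0 : (0:ℝ) ≤ x := le_of_lt hx
    rw [Real.norm_eq_abs, Real.norm_eq_abs, abs_of_nonneg (by positivity),
      abs_of_nonneg (Real.exp_nonneg _)]
    rw [div_le_iff₀ (by linarith)]
    nlinarith [Real.exp_nonneg (-c * x)]

lemma aux_tendsto (hc : 0 < c) :
    Tendsto (fun x => -(Real.log (1 + x) * Real.exp (-c * x))) atTop (nhds 0) := by
  rw [← neg_zero]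
  apply Tendsto.neg
  apply squeeze_zero'
  · filter_upwards [eventually_ge_atTop (0:ℝ)] with x hx
    have hlog : 0 ≤ Real.log (1 + x) := Real.log_nonneg (by linarith)
    positivity
  · filter_upwards [eventually_ge_atTop (0:ℝ)] with x hx
    exact aux_bound hc hx
  · rw [show (0:ℝ) = (2/c) * 0 by ring]
    apply Tendsto.const_mul
    have : Tendsto (fun x : ℝ => (c / 2) * x) atTop atTop :=
      Tendsto.const_mul_atTop (by positivity) tendsto_id
    have := Real.tendsto_exp_neg_atTop_nhds_zero.comp this
    refine this.congr fun x => ?_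
    simp [Function.comp, neg_mul]

lemma aux_deriv (hc : 0 < c) {x : ℝ} (hx : 0 ≤ x) :
    HasDerivAt (fun y => -(Real.log (1 + y) * Real.exp (-c * y)))
      (c * (Real.log (1 + x) * Real.exp (-c * x)) - Real.exp (-c * x) / (1 + x)) x := by
  have h1x : (0:ℝ) < 1 + x := by linarith
  have hlog : HasDerivAt (fun y : ℝ => Real.log (1 + y)) (1 / (1 + x)) x := by
    have hadd : HasDerivAt (fun y : ℝ => 1 + y) 1 x := by
      simpa using (hasDerivAt_id x).const_add (1:ℝ)
    have := (Real.hasDerivAt_log (ne_of_gt h1x)).comp x hadd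
    simpa [one_div, Function.comp_def] using this
  have hexp : HasDerivAt (fun y : ℝ => Real.exp (-c * y)) (Real.exp (-c * x) * (-c)) x := by
    have : HasDerivAt (fun y : ℝ => -c * y) (-c) x := by
      simpa using (hasDerivAt_id x).const_mul (-c)
    simpa using this.exp
  have : HasDerivAt (fun y => -(Real.log (1 + y) * Real.exp (-c * y)))
      (-(1 / (1 + x) * Real.exp (-c * x) + Real.log (1 + x) * (Real.exp (-c * x) * -c))) x :=
    (hlog.mul hexp).neg
  convert this using 1
  ring

lemma aux_main (hc : 0 < c) :
    c * ∫ x in Ioi (0:ℝ), Real.log (1 + x) * Real.exp (-c * x)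
      = ∫ x in Ioi (0:ℝ), Real.exp (-c * x) / (1 + x) := by
  have hftc := integral_Ioi_of_hasDerivAt_of_tendsto'
    (f := fun y => -(Real.log (1 + y) * Real.exp (-c * y)))
    (f' := fun x => c * (Real.log (1 + x) * Real.exp (-c * x)) - Real.exp (-c * x) / (1 + x))
    (a := 0) (m := 0)
    (fun x hx => aux_deriv hc hx)
    (((aux_int_g hc).const_mul c).sub (aux_int_h hc))
    (aux_tendsto hc)
  rw [integral_sub (((aux_int_g hc).const_mul c)) (aux_int_h hc), integral_const_mul] at hftc
  simp only [add_zero, Real.log_one, zero_mul, neg_zero, mul_zero, sub_zero, zero_sub,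
    neg_neg] at hftc
  linarith [hftc]

lemma aux_E1 (hc : 0 < c) :
    (∫ x in Ioi (0:ℝ), Real.exp (-c * x) / (1 + x)) = Real.exp c * expIntE1 c := by
  have e := (MeasurableEquiv.addRight (1:ℝ)).measurableEmbedding
  have h1 : Measure.map (MeasurableEquiv.addRight (1:ℝ)) volume = volume := by
    simpa using map_add_right_eq_self (volume : Measure ℝ) 1
  have hs : (MeasurableEquiv.addRight (1:ℝ)) ⁻¹' Ioi 1 = Ioi 0 := by
    ext x; simp [MeasurableEquiv.addRight]
  have key : expIntE1 c = ∫ x in Ioi (0:ℝ), Real.exp (-c * (x + 1)) / (x + 1) := by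
    rw [expIntE1]
    conv_lhs => rw [← h1]
    rw [e.setIntegral_map, hs]
    simp [MeasurableEquiv.addRight]
  have key2 : expIntE1 c = Real.exp (-c) * ∫ x in Ioi (0:ℝ), Real.exp (-c * x) / (1 + x) := by
    rw [key, ← integral_const_mul]
    apply setIntegral_congr_fun measurableSet_Ioi
    intro x hx
    simp only []
    rw [show (-c) * (x + 1) = -c + -c * x by ring, Real.exp_add]
    ring_nf
  rw [key2, ← mul_assoc, ← Real.exp_add]
  simp

end aux

/-- If `γ` is exponentially distributed with mean `P/U` then
`E[log₂(1+γ)] = log₂(e) e^{U/P} E₁(U/P)`. -/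
theorem zf_per_user_rate
    {Ω : Type*} [MeasureSpace Ω] [IsProbabilityMeasure (ℙ : Measure Ω)]
    (P U : ℝ) (hP : 0 < P) (hU : 0 < U)
    (γ : Ω → ℝ)
    (hγ : Measure.map γ ℙ = volume.withDensity (fun x =>
        ENNReal.ofReal (if 0 ≤ x then (U / P) * Real.exp (-(U / P) * x) else 0))) :
    ∫ ω, logb 2 (1 + γ ω) ∂ℙ
      = logb 2 (Real.exp 1) * Real.exp (U / P) * expIntE1 (U / P) := by
  set c := U / P with hc_def
  have hc : 0 < c := div_pos hU hP
  -- density as a real function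
  set d : ℝ → ℝ := fun x => if 0 ≤ x then c * Real.exp (-c * x) else 0 with hd_def
  have hd_meas : Measurable d := by
    apply Measurable.ite measurableSet_Ici
    · exact (Real.measurable_exp.comp (measurable_id.const_mul _)).const_mul _
    · exact measurable_const
  have hd_nonneg : ∀ x, 0 ≤ d x := by
    intro x; by_cases h : 0 ≤ x <;> simp [hd_def, h] <;> positivity
  -- γ is a.e.-measurable
  have hγmeas : AEMeasurable γ ℙ := by
    by_contra h
    rw [Measure.map_of_not_aemeasurable h] at hγ
    have h0 : (volume.withDensity (fun x =>
        ENNReal.ofReal (if 0 ≤ x then c * Real.exp (-c * x) else 0))) (Ioc 0 1) = 0 := by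
      rw [← hγ]; simp
    rw [withDensity_apply _ measurableSet_Ioc] at h0
    have hlb : ENNReal.ofReal (c * Real.exp (-c)) * volume (Ioc (0:ℝ) 1)
        ≤ ∫⁻ x in Ioc (0:ℝ) 1, ENNReal.ofReal (if 0 ≤ x then c * Real.exp (-c * x) else 0) := by
      rw [← setLIntegral_const]
      apply setLIntegral_mono (hd_meas.ennreal_ofReal)
      intro x hx
      rw [show d x = c * Real.exp (-c * x) from if_pos hx.1.le]
      apply ENNReal.ofReal_le_ofReal
      apply mul_le_mul_of_nonneg_left _ hc.le
      apply Real.exp_le_exp.2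
      nlinarith [hx.1, hx.2]
    rw [h0] at hlb
    simp only [Real.volume_Ioc, sub_zero, ENNReal.ofReal_one, mul_one,
      nonpos_iff_eq_zero, ENNReal.ofReal_eq_zero] at hlb
    nlinarith [Real.exp_pos (-c)]
  -- the measurable function we integrate
  have hf_meas : Measurable (fun x : ℝ => Real.logb 2 (1 + x)) := by
    simp only [Real.logb]
    exact (Real.measurable_log.comp (measurable_const.add measurable_id)).div_const _
  -- change of variables
  have step1 : ∫ ω, Real.logb 2 (1 + γ ω) ∂ℙ
      = ∫ x, Real.logb 2 (1 + x) ∂(Measure.map γ ℙ) :=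
    (integral_map hγmeas hf_meas.aestronglyMeasurable).symm
  rw [step1, hγ]
  -- with density
  have step2 : ∫ x, Real.logb 2 (1 + x)
        ∂(volume.withDensity (fun x => ENNReal.ofReal (d x)))
      = ∫ x, (d x).toNNReal • Real.logb 2 (1 + x) := by
    rw [← integral_withDensity_eq_integral_smul (hd_meas.real_toNNReal)]
    rfl
  rw [show (fun x : ℝ => ENNReal.ofReal (if 0 ≤ x then U / P * Real.exp (-(U / P) * x) else 0))
      = fun x => ENNReal.ofReal (d x) from rfl]
  rw [step2]
  -- reduce to Ioi 0
  have step3 : ∫ x, (d x).toNNReal • Real.logb 2 (1 + x)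
      = ∫ x in Ioi (0:ℝ), c * Real.exp (-c * x) * Real.logb 2 (1 + x) := by
    rw [← integral_Ici_eq_integral_Ioi, ← integral_indicator measurableSet_Ici]
    congr 1
    ext x
    rw [NNReal.smul_def, smul_eq_mul, Real.coe_toNNReal _ (hd_nonneg x)]
    by_cases h : 0 ≤ x
    · rw [indicator_of_mem (by exact h), show d x = c * Real.exp (-c * x) from if_pos h]
    · rw [indicator_of_notMem (by simpa using h), show d x = 0 from if_neg h, zero_mul]
  rw [step3]
  -- express logb via log
  have step4 : ∫ x in Ioi (0:ℝ), c * Real.exp (-c * x) * Real.logb 2 (1 + x)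
      = (Real.log 2)⁻¹ * (c * ∫ x in Ioi (0:ℝ), Real.log (1 + x) * Real.exp (-c * x)) := by
    rw [← integral_const_mul, ← integral_const_mul]
    apply setIntegral_congr_fun measurableSet_Ioi
    intro x hx
    simp only [Real.logb]
    field_simp
  rw [step4, aux_main hc, aux_E1 hc]
  have : Real.logb 2 (Real.exp 1) = (Real.log 2)⁻¹ := by
    simp [Real.logb, Real.log_exp]
  rw [this]
  ring
end

section
/- Let Z ~ Exp(1), and let Y₁, Y₂ be independent Gamma(M,1) random variables, all mutually independent, and let α, β, δ₁, δ₂ > 0 with δ₁ ≠ δ₂. Define X = αZ/(1 + β(δ₁Y₁ + δ₂Y₂)). Then the cdf of X is F_X(x) = 1 - e^{-x/α} Σ_{j=1}^2 Σ_{i=0}^{M-1} a_i^{(j)} i! / ((β/α)x + 1/δ_j)^{i+1} for x ≥ 0, where a_i^{(1)} = (1/(δ₁^{i+1}(M-1)!)) (δ₁/(δ₁-δ₂))^M ((2(M-1)-i)!/(i!(M-1-i)!)) (δ₂/(δ₂-δ₁))^{M-1-i} and a_i^{(2)} is obtained by swapping δ₁ and δ₂. -/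
open MeasureTheory ProbabilityTheory Real Set
open scoped ProbabilityTheory ENNReal NNReal

/-- The coefficient `a_i^{(1)}` (with `δ₁, δ₂` swapped it gives `a_i^{(2)}`). -/
noncomputable def coefA (M : ℕ) (δ₁ δ₂ : ℝ) (i : ℕ) : ℝ :=
  (1 / (δ₁ ^ (i + 1) * (Nat.factorial (M - 1) : ℝ))) * (δ₁ / (δ₁ - δ₂)) ^ M *
    ((Nat.factorial (2 * (M - 1) - i) : ℝ) /
      ((Nat.factorial i : ℝ) * (Nat.factorial (M - 1 - i) : ℝ))) *
    (δ₂ / (δ₂ - δ₁)) ^ (M - 1 - i)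

noncomputable def S1 (a c : ℕ) (X d : ℝ) : ℝ :=
  ∑ k ∈ Finset.range a, (Nat.choose (c + k) k : ℝ) * (-1) ^ k / (d ^ (c + 1 + k) * X ^ (a - k))

lemma S1_one_succ (c : ℕ) (Y e : ℝ) : S1 1 (c + 1) Y e = (1 / e) * S1 1 c Y e := by
  simp only [S1, Finset.sum_range_one]
  simp only [Nat.add_zero, Nat.choose_self, Nat.choose_zero_right]
  rw [pow_succ]  -- e ^ (c+1+1+0)?  iterate
  push_cast
  ring

lemma S1_rec0 (a : ℕ) (X e : ℝ) :
    S1 (a + 1) 0 X e = (1 / e) * (1 / X ^ (a + 1)) - (1 / e) * S1 a 0 X e := by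
  simp only [S1]
  rw [Finset.sum_range_succ' (fun k => (Nat.choose (0 + k) k : ℝ) * (-1) ^ k / (e ^ (0 + 1 + k) * X ^ (a + 1 - k))) a]
  have hterm : ∀ k ∈ Finset.range a,
      (Nat.choose (0 + (k + 1)) (k + 1) : ℝ) * (-1) ^ (k + 1) / (e ^ (0 + 1 + (k + 1)) * X ^ (a + 1 - (k + 1)))
      = -((1 / e) * ((Nat.choose (0 + k) k : ℝ) * (-1) ^ k / (e ^ (0 + 1 + k) * X ^ (a - k)))) := by
    intro k hk
    have h1 : a + 1 - (k + 1) = a - k := by omega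
    rw [h1]
    simp only [Nat.zero_add, Nat.choose_self]
    have h5 : e ^ (1 + (k + 1)) = e ^ (1 + k) * e := by
      rw [show 1 + (k + 1) = (1 + k) + 1 from by omega, pow_succ]
    rw [pow_succ (-1 : ℝ) k, h5]
    push_cast
    ring
  rw [Finset.sum_congr rfl hterm, Finset.sum_neg_distrib, ← Finset.mul_sum]
  simp only [Nat.zero_add, Nat.add_zero, Nat.choose_zero_right, Nat.sub_zero, pow_zero, pow_one]
  push_cast
  ring

lemma S1_rec (a c : ℕ) (X d : ℝ) :
    S1 (a + 1) (c + 1) X d = (1 / d) * S1 (a + 1) c X d - (1 / d) * S1 a (c + 1) X d := by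
  simp only [S1]
  rw [Finset.sum_range_succ' (fun k => (Nat.choose (c + 1 + k) k : ℝ) * (-1) ^ k / (d ^ (c + 1 + 1 + k) * X ^ (a + 1 - k))) a,
      Finset.sum_range_succ' (fun k => (Nat.choose (c + k) k : ℝ) * (-1) ^ k / (d ^ (c + 1 + k) * X ^ (a + 1 - k))) a]
  have hterm : ∀ k ∈ Finset.range a,
      (Nat.choose (c + 1 + (k + 1)) (k + 1) : ℝ) * (-1) ^ (k + 1) / (d ^ (c + 1 + 1 + (k + 1)) * X ^ (a + 1 - (k + 1)))
      = (1 / d) * ((Nat.choose (c + (k + 1)) (k + 1) : ℝ) * (-1) ^ (k + 1) / (d ^ (c + 1 + (k + 1)) * X ^ (a + 1 - (k + 1))))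
        - (1 / d) * ((Nat.choose (c + 1 + k) k : ℝ) * (-1) ^ k / (d ^ (c + 1 + 1 + k) * X ^ (a - k))) := by
    intro k hk
    have h1 : a + 1 - (k + 1) = a - k := by omega
    have hch : (c + 1 + (k + 1)).choose (k + 1) = (c + (k + 1)).choose (k + 1) + (c + 1 + k).choose k := by
      have h2 : c + 1 + (k + 1) = (c + k + 1) + 1 := by omega
      have h3 : c + (k + 1) = c + k + 1 := by omega
      have h4 : c + 1 + k = c + k + 1 := by omega
      rw [h2, h3, h4, Nat.choose_succ_succ' (c + k + 1) k]
      omega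
    rw [h1, hch]
    have h5 : d ^ (c + 1 + 1 + (k + 1)) = d ^ (c + 1 + 1 + k) * d := by
      rw [show c + 1 + 1 + (k + 1) = (c + 1 + 1 + k) + 1 from by omega, pow_succ]
    have h6 : d ^ (c + 1 + (k + 1)) = d ^ (c + 1 + 1 + k) := by norm_num; ring_nf
    rw [h5, h6, pow_succ (-1 : ℝ) k]
    push_cast
    ring
  rw [Finset.sum_congr rfl hterm, Finset.sum_sub_distrib, ← Finset.mul_sum, ← Finset.mul_sum]
  simp only [Nat.add_zero, Nat.choose_zero_right, Nat.sub_zero, pow_zero]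
  rw [pow_succ d (c + 1)]
  push_cast
  ring

lemma pf_main (n : ℕ) : ∀ (m : ℕ) (X d : ℝ), X ≠ 0 → X + d ≠ 0 → d ≠ 0 →
    1 / (X ^ (m + 1) * (X + d) ^ (n + 1)) = S1 (m + 1) n X d + S1 (n + 1) m (X + d) (-d) := by
  induction n with
  | zero =>
    intro m
    induction m with
    | zero =>
      intro X d hX hY hd
      simp only [S1]
      rw [Finset.sum_range_one, Finset.sum_range_one]
      simp only [Nat.add_zero, Nat.zero_add, Nat.choose_self, Nat.choose_zero_right,
        pow_zero, pow_one]
      field_simp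
      ring
    | succ m ihm =>
      intro X d hX hY hd
      have hrec : 1 / (X ^ (m + 1 + 1) * (X + d) ^ (0 + 1))
          = (1 / d) * (1 / X ^ (m + 1 + 1)) - (1 / d) * (1 / (X ^ (m + 1) * (X + d) ^ (0 + 1))) := by
        rw [pow_succ X (m + 1)]
        field_simp
        ring
      rw [hrec, ihm X d hX hY hd, S1_rec0 (m + 1) X d]
      have h2 : S1 1 (m + 1) (X + d) (-d) = (1 / (-d)) * S1 1 m (X + d) (-d) := S1_one_succ m (X + d) (-d)
      rw [h2]
      rw [show (1 : ℝ) / (-d) = -(1 / d) from by ring]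
      ring
  | succ n ihn =>
    intro m
    induction m with
    | zero =>
      intro X d hX hY hd
      have hrec : 1 / (X ^ (0 + 1) * (X + d) ^ (n + 1 + 1))
          = (1 / d) * (1 / (X ^ (0 + 1) * (X + d) ^ (n + 1))) - (1 / d) * (1 / (X + d) ^ (n + 1 + 1)) := by
        rw [pow_succ (X + d) (n + 1)]
        field_simp
        ring
      rw [hrec, ihn 0 X d hX hY hd, S1_rec0 (n + 1) (X + d) (-d), S1_one_succ n X d]
      rw [show (1 : ℝ) / (-d) = -(1 / d) from by ring]
      ring
    | succ m ihm =>
      intro X d hX hY hd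
      have hrec : 1 / (X ^ (m + 1 + 1) * (X + d) ^ (n + 1 + 1))
          = (1 / d) * (1 / (X ^ (m + 1 + 1) * (X + d) ^ (n + 1)))
            - (1 / d) * (1 / (X ^ (m + 1) * (X + d) ^ (n + 1 + 1))) := by
        rw [pow_succ (X + d) (n + 1), pow_succ X (m + 1)]
        field_simp
        ring
      rw [hrec, ihn (m + 1) X d hX hY hd, ihm X d hX hY hd,
        S1_rec (m + 1) n X d, S1_rec (n + 1) m (X + d) (-d)]
      rw [show (1 : ℝ) / (-d) = -(1 / d) from by ring]
      ring

lemma coef_term (i j : ℕ) {δ₁ δ₂ t : ℝ} (h1 : 0 < δ₁) (h2 : 0 < δ₂) (hne : δ₁ ≠ δ₂) (ht : 0 ≤ t) :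
    coefA (i + j + 1) δ₁ δ₂ i * (Nat.factorial i : ℝ) / (t + 1 / δ₁) ^ (i + 1)
    = (1 / (δ₁ * δ₂)) ^ (i + j + 1) *
      ((Nat.choose (i + j + j) j : ℝ) * (-1) ^ j /
        ((1 / δ₂ - 1 / δ₁) ^ (i + j + 1 + j) * (t + 1 / δ₁) ^ (i + 1))) := by
  have hX : (0 : ℝ) < t + 1 / δ₁ := by positivity
  have hD : δ₁ - δ₂ ≠ 0 := sub_ne_zero.mpr hne
  have hch : (Nat.choose (i + j + j) j : ℝ) = (Nat.factorial (i + j + j) : ℝ) / ((Nat.factorial j : ℝ) * (Nat.factorial (i + j) : ℝ)) := by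
    rw [Nat.cast_choose ℝ (by omega : j ≤ i + j + j), show i + j + j - j = i + j from by omega]
  rw [hch]
  unfold coefA
  rw [show i + j + 1 - 1 = i + j from by omega]
  rw [show 2 * (i + j) - i = i + j + j from by omega, show i + j - i = j from by omega]
  have hd1 : δ₁ ≠ 0 := ne_of_gt h1
  have hd2 : δ₂ ≠ 0 := ne_of_gt h2
  have e3 : (1 : ℝ) / δ₂ - 1 / δ₁ = (δ₁ - δ₂) / (δ₁ * δ₂) := by
    rw [div_sub_div _ _ hd2 hd1, one_mul, mul_one, mul_comm δ₂ δ₁]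
  have e4 : δ₂ - δ₁ = -(δ₁ - δ₂) := by ring
  rw [e3, e4, div_pow, div_pow, div_pow, div_pow, neg_pow (δ₁ - δ₂) j]
  rw [show i + j + 1 + j = i + j + 1 + j from rfl]
  rw [show i + j + 1 = (i + 1) + j from by omega]
  rw [pow_add δ₁ (i + 1) j, pow_add (δ₁ - δ₂) (i + 1) j,
    pow_add (δ₁ - δ₂) (i + 1 + j) j, mul_pow δ₁ δ₂ (i + 1 + j),
    mul_pow δ₁ δ₂ (i + 1 + j + j), pow_add δ₁ (i + 1) j, pow_add δ₂ (i + 1) j,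
    pow_add δ₁ (i + 1 + j) j, pow_add δ₂ (i + 1 + j) j, pow_add δ₁ (i + 1) j, pow_add δ₂ (i + 1) j]
  have hf1 : (Nat.factorial (i + j) : ℝ) ≠ 0 := Nat.cast_ne_zero.mpr (Nat.factorial_ne_zero _)
  have hf2 : (Nat.factorial i : ℝ) ≠ 0 := Nat.cast_ne_zero.mpr (Nat.factorial_ne_zero _)
  have hf3 : (Nat.factorial j : ℝ) ≠ 0 := Nat.cast_ne_zero.mpr (Nat.factorial_ne_zero _)
  have hXne : (t + 1 / δ₁) ≠ 0 := ne_of_gt hX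
  field_simp
  ring_nf
  simp only [show ((-1 : ℝ)) ^ (j * 2) = 1 from by rw [pow_mul']; norm_num]
  ring

lemma key1 (m : ℕ) {δ₁ δ₂ t : ℝ} (h1 : 0 < δ₁) (h2 : 0 < δ₂) (hne : δ₁ ≠ δ₂) (ht : 0 ≤ t) :
    ∑ i ∈ Finset.range (m + 1), coefA (m + 1) δ₁ δ₂ i * (Nat.factorial i : ℝ) / (t + 1 / δ₁) ^ (i + 1)
    = (1 / (δ₁ * δ₂)) ^ (m + 1) * S1 (m + 1) m (t + 1 / δ₁) (1 / δ₂ - 1 / δ₁) := by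
  rw [S1, Finset.mul_sum]
  rw [← Finset.sum_range_reflect (fun k =>
    (1 / (δ₁ * δ₂)) ^ (m + 1) * ((Nat.choose (m + k) k : ℝ) * (-1) ^ k /
      ((1 / δ₂ - 1 / δ₁) ^ (m + 1 + k) * (t + 1 / δ₁) ^ (m + 1 - k)))) (m + 1)]
  apply Finset.sum_congr rfl
  intro i hi
  have him : i ≤ m := Nat.lt_succ_iff.mp (Finset.mem_range.mp hi)
  obtain ⟨j, hj⟩ : ∃ j, m = i + j := ⟨m - i, by omega⟩
  subst hj
  have r1 : i + j + 1 - 1 - i = j := by omega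
  have r2 : i + j + (i + j + 1 - 1 - i) = i + j + j := by omega
  have r3 : i + j + 1 + (i + j + 1 - 1 - i) = i + j + 1 + j := by omega
  have r4 : i + j + 1 - (i + j + 1 - 1 - i) = i + 1 := by omega
  rw [r2, r3, r4, r1]
  exact coef_term i j h1 h2 hne ht

lemma partfrac (m : ℕ) {δ₁ δ₂ t : ℝ} (h1 : 0 < δ₁) (h2 : 0 < δ₂) (hne : δ₁ ≠ δ₂) (ht : 0 ≤ t) :
    (∑ i ∈ Finset.range (m + 1), coefA (m + 1) δ₁ δ₂ i * (Nat.factorial i : ℝ) / (t + 1 / δ₁) ^ (i + 1))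
    + (∑ i ∈ Finset.range (m + 1), coefA (m + 1) δ₂ δ₁ i * (Nat.factorial i : ℝ) / (t + 1 / δ₂) ^ (i + 1))
    = 1 / (1 + t * δ₁) ^ (m + 1) * (1 / (1 + t * δ₂) ^ (m + 1)) := by
  have hd1 : δ₁ ≠ 0 := ne_of_gt h1
  have hd2 : δ₂ ≠ 0 := ne_of_gt h2
  have hX : (0 : ℝ) < t + 1 / δ₁ := by positivity
  have hY : (0 : ℝ) < t + 1 / δ₂ := by positivity
  have hd : 1 / δ₂ - 1 / δ₁ ≠ 0 := by
    intro h
    apply hne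
    have h' : (1 : ℝ) / δ₂ = 1 / δ₁ := by linarith [sub_eq_zero.mp h]
    field_simp at h'
    linarith
  have hpf := pf_main m m (t + 1 / δ₁) (1 / δ₂ - 1 / δ₁) (ne_of_gt hX)
      (by rw [show t + 1 / δ₁ + (1 / δ₂ - 1 / δ₁) = t + 1 / δ₂ from by ring]; exact ne_of_gt hY) hd
  rw [show t + 1 / δ₁ + (1 / δ₂ - 1 / δ₁) = t + 1 / δ₂ from by ring,
    show -(1 / δ₂ - 1 / δ₁) = 1 / δ₁ - 1 / δ₂ from by ring] at hpf
  rw [key1 m h1 h2 hne ht, key1 m h2 h1 (Ne.symm hne) ht, mul_comm δ₂ δ₁,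
    ← mul_add, ← hpf]
  have hb1 : (1 + t * δ₁) = δ₁ * (t + 1 / δ₁) := by field_simp; ring
  have hb2 : (1 + t * δ₂) = δ₂ * (t + 1 / δ₂) := by field_simp; ring
  rw [hb1, hb2, mul_pow, mul_pow, div_pow, one_pow]
  field_simp
  ring

noncomputable def expD : ℝ → ℝ≥0∞ := fun y => ENNReal.ofReal (if 0 ≤ y then Real.exp (-y) else 0)

noncomputable def gamD (n : ℕ) : ℝ → ℝ≥0∞ :=
  fun y => ENNReal.ofReal (if 0 ≤ y then y ^ n * Real.exp (-y) / (Nat.factorial n : ℝ) else 0)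

lemma expD_eq : expD = exponentialPDF 1 := by
  funext y
  simp [expD, exponentialPDF_eq]

lemma gamD_eq (n : ℕ) : gamD n = gammaPDF ((n : ℝ) + 1) 1 := by
  funext y
  rw [gammaPDF_eq]
  simp only [gamD]
  by_cases hy : 0 ≤ y
  · rw [if_pos hy, if_pos hy]
    congr 1
    rw [Real.Gamma_nat_eq_factorial n, add_sub_cancel_right, rpow_natCast, one_rpow]
    rw [one_mul]
    ring
  · rw [if_neg hy, if_neg hy]

lemma gamD_meas (n : ℕ) : Measurable (gamD n) := by
  rw [gamD_eq]
  exact (measurable_gammaPDFReal _ _).ennreal_ofReal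

lemma isProb_gamD (n : ℕ) : IsProbabilityMeasure (volume.withDensity (gamD n)) := by
  constructor
  rw [withDensity_apply _ MeasurableSet.univ, Measure.restrict_univ, gamD_eq]
  exact lintegral_gammaPDF_eq_one (by positivity) one_pos

lemma isProb_expD : IsProbabilityMeasure (volume.withDensity expD) := by
  constructor
  rw [withDensity_apply _ MeasurableSet.univ, Measure.restrict_univ, expD_eq]
  exact lintegral_exponentialPDF_eq_one one_pos

lemma gamD_Iio (n : ℕ) : (volume.withDensity (gamD n)) (Set.Iio 0) = 0 := by
  rw [gamD_eq, withDensity_apply _ measurableSet_Iio]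
  exact lintegral_gammaPDF_of_nonpos le_rfl

lemma lint_exp_gamma (n : ℕ) {c : ℝ} (hc : 0 ≤ c) :
    ∫⁻ y, gamD n y * ENNReal.ofReal (Real.exp (-(c * y)))
      = ENNReal.ofReal (1 / (1 + c) ^ (n + 1)) := by
  have h1c : (0 : ℝ) < 1 + c := by linarith
  have key : ∀ y : ℝ, gamD n y * ENNReal.ofReal (Real.exp (-(c * y)))
      = ENNReal.ofReal (1 / (1 + c) ^ (n + 1)) * gammaPDF ((n : ℝ) + 1) (1 + c) y := by
    intro y
    rw [gammaPDF_eq]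
    simp only [gamD]
    by_cases hy : 0 ≤ y
    · rw [if_pos hy, if_pos hy, ← ENNReal.ofReal_mul (by positivity),
        ← ENNReal.ofReal_mul (by positivity)]
      congr 1
      rw [Real.Gamma_nat_eq_factorial n, add_sub_cancel_right, rpow_natCast,
        show ((n : ℝ) + 1) = ((n + 1 : ℕ) : ℝ) from by push_cast; ring, rpow_natCast,
        show -((1 + c) * y) = -y + -(c * y) from by ring, Real.exp_add]
      have hpne : ((1 + c) ^ (n + 1) : ℝ) ≠ 0 := by positivity
      have hfne : ((Nat.factorial n : ℝ)) ≠ 0 := Nat.cast_ne_zero.mpr (Nat.factorial_ne_zero _)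
      field_simp
    · rw [if_neg hy, if_neg hy]
      simp
  have hm : Measurable (gammaPDF ((n : ℝ) + 1) (1 + c)) :=
    (measurable_gammaPDFReal _ _).ennreal_ofReal
  rw [lintegral_congr key, lintegral_const_mul _ hm,
    lintegral_gammaPDF_eq_one (by positivity) h1c, mul_one]

lemma iIndepFun_ae_congr {Ω : Type*} [MeasureSpace Ω] {f g : Fin 3 → Ω → ℝ}
    (hf : iIndepFun (m := fun _ => Real.measurableSpace) f ℙ) (h : ∀ i, f i =ᵐ[ℙ] g i) :
    iIndepFun (m := fun _ => Real.measurableSpace) g ℙ := by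
  rw [iIndepFun_iff_measure_inter_preimage_eq_mul] at hf ⊢
  intro S sets hsets
  have hae : ∀ᵐ ω ∂(ℙ : Measure Ω), ∀ i, f i ω = g i ω := ae_all_iff.mpr h
  have h1 : ℙ (⋂ i ∈ S, g i ⁻¹' sets i) = ℙ (⋂ i ∈ S, f i ⁻¹' sets i) := by
    apply measure_congr
    rw [Filter.eventuallyEq_set]
    filter_upwards [hae] with ω hω
    simp [Set.mem_iInter, Set.mem_preimage, hω]
  rw [h1, hf S hsets]
  exact Finset.prod_congr rfl fun i _ =>
    (measure_congr (by
      rw [Filter.eventuallyEq_set]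
      filter_upwards [h i] with ω hω
      simp [Set.mem_preimage, hω])).symm

/-- Cdf of the approximate ZF SINR `X = αZ/(1 + β(δ₁Y₁ + δ₂Y₂))` with `Z ~ Exp(1)`,
`Y₁, Y₂ ~ Gamma(M,1)` mutually independent. -/
theorem cdf_zf_sinr_approx
    {Ω : Type*} [MeasureSpace Ω] [IsProbabilityMeasure (ℙ : Measure Ω)]
    (M : ℕ) (hM : 1 ≤ M) (α β δ₁ δ₂ : ℝ)
    (hα : 0 < α) (hβ : 0 < β) (hδ₁ : 0 < δ₁) (hδ₂ : 0 < δ₂) (hne : δ₁ ≠ δ₂)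
    (Z Y₁ Y₂ : Ω → ℝ)
    (hZ : Measure.map Z ℙ = volume.withDensity (fun y =>
        ENNReal.ofReal (if 0 ≤ y then Real.exp (-y) else 0)))
    (hY₁ : Measure.map Y₁ ℙ = volume.withDensity (fun y =>
        ENNReal.ofReal (if 0 ≤ y then y ^ (M - 1) * Real.exp (-y) / (Nat.factorial (M - 1)) else 0)))
    (hY₂ : Measure.map Y₂ ℙ = volume.withDensity (fun y =>
        ENNReal.ofReal (if 0 ≤ y then y ^ (M - 1) * Real.exp (-y) / (Nat.factorial (M - 1)) else 0)))
    (hIndep : iIndepFun (m := fun _ => Real.measurableSpace) ![Z, Y₁, Y₂] ℙ) :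
    ∀ x : ℝ, 0 ≤ x →
      ℙ {ω | α * Z ω / (1 + β * (δ₁ * Y₁ ω + δ₂ * Y₂ ω)) ≤ x}
        = ENNReal.ofReal (1 - Real.exp (-x / α) *
            ((∑ i ∈ Finset.range M,
                coefA M δ₁ δ₂ i * (Nat.factorial i : ℝ) / ((β / α) * x + 1 / δ₁) ^ (i + 1))
             + ∑ i ∈ Finset.range M,
                coefA M δ₂ δ₁ i * (Nat.factorial i : ℝ) / ((β / α) * x + 1 / δ₂) ^ (i + 1))) := by
  intro x hx
  obtain ⟨m, rfl⟩ : ∃ m, M = m + 1 := ⟨M - 1, by omega⟩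
  simp only [Nat.add_sub_cancel] at hY₁ hY₂
  have hZν : Measure.map Z ℙ = volume.withDensity expD := hZ
  have hY₁ν : Measure.map Y₁ ℙ = volume.withDensity (gamD m) := hY₁
  have hY₂ν : Measure.map Y₂ ℙ = volume.withDensity (gamD m) := hY₂
  haveI : IsProbabilityMeasure (volume.withDensity (gamD m)) := isProb_gamD m
  haveI : IsProbabilityMeasure (volume.withDensity expD) := isProb_expD
  haveI : IsProbabilityMeasure ((volume.withDensity (gamD m)).prod (volume.withDensity (gamD m))) := by
    infer_instance
  -- a.e.-measurability of the three random variables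
  have hZae : AEMeasurable Z ℙ := by
    by_contra hc
    rw [Measure.map_of_not_aemeasurable hc] at hZν
    have h0 : (volume.withDensity expD) Set.univ = 1 := measure_univ
    rw [← hZν] at h0
    simp at h0
  have hY₁ae : AEMeasurable Y₁ ℙ := by
    by_contra hc
    rw [Measure.map_of_not_aemeasurable hc] at hY₁ν
    have h0 : (volume.withDensity (gamD m)) Set.univ = 1 := measure_univ
    rw [← hY₁ν] at h0
    simp at h0
  have hY₂ae : AEMeasurable Y₂ ℙ := by
    by_contra hc
    rw [Measure.map_of_not_aemeasurable hc] at hY₂ν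
    have h0 : (volume.withDensity (gamD m)) Set.univ = 1 := measure_univ
    rw [← hY₂ν] at h0
    simp at h0
  -- measurable modifications
  set Z' := hZae.mk Z with hZ'def
  set Y₁' := hY₁ae.mk Y₁ with hY₁'def
  set Y₂' := hY₂ae.mk Y₂ with hY₂'def
  have hZm : Measurable Z' := hZae.measurable_mk
  have hY₁m : Measurable Y₁' := hY₁ae.measurable_mk
  have hY₂m : Measurable Y₂' := hY₂ae.measurable_mk
  have hZe : Z =ᵐ[ℙ] Z' := hZae.ae_eq_mk
  have hY₁e : Y₁ =ᵐ[ℙ] Y₁' := hY₁ae.ae_eq_mk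
  have hY₂e : Y₂ =ᵐ[ℙ] Y₂' := hY₂ae.ae_eq_mk
  have hmapZ : Measure.map Z' ℙ = volume.withDensity expD :=
    (Measure.map_congr hZe).symm.trans hZν
  have hmapY₁ : Measure.map Y₁' ℙ = volume.withDensity (gamD m) :=
    (Measure.map_congr hY₁e).symm.trans hY₁ν
  have hmapY₂ : Measure.map Y₂' ℙ = volume.withDensity (gamD m) :=
    (Measure.map_congr hY₂e).symm.trans hY₂ν
  have hIndep' : iIndepFun (m := fun _ => Real.measurableSpace) ![Z', Y₁', Y₂'] ℙ := by
    apply iIndepFun_ae_congr hIndep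
    intro i
    fin_cases i
    · exact hZe
    · exact hY₁e
    · exact hY₂e
  have hev : ℙ {ω | α * Z ω / (1 + β * (δ₁ * Y₁ ω + δ₂ * Y₂ ω)) ≤ x}
      = ℙ {ω | α * Z' ω / (1 + β * (δ₁ * Y₁' ω + δ₂ * Y₂' ω)) ≤ x} := by
    apply measure_congr
    rw [Filter.eventuallyEq_set]
    filter_upwards [hZe, hY₁e, hY₂e] with ω h1 h2 h3
    simp only [Set.mem_setOf_eq, h1, h2, h3]
  rw [hev]
  -- independence and product structure
  have hmeas3 : ∀ i, Measurable (![Z', Y₁', Y₂'] i) := by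
    intro i
    fin_cases i
    · exact hZm
    · exact hY₁m
    · exact hY₂m
  have hpairYZ : IndepFun (fun ω => (Y₁' ω, Y₂' ω)) Z' ℙ :=
    hIndep'.indepFun_prodMk hmeas3 1 2 0 (by decide) (by decide)
  have hYY : IndepFun Y₁' Y₂' ℙ := hIndep'.indepFun (by decide : (1 : Fin 3) ≠ 2)
  have hmapP : Measure.map (fun ω => (Y₁' ω, Y₂' ω)) ℙ
      = (volume.withDensity (gamD m)).prod (volume.withDensity (gamD m)) := by
    rw [(indepFun_iff_map_prod_eq_prod_map_map hY₁m.aemeasurable hY₂m.aemeasurable).mp hYY,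
      hmapY₁, hmapY₂]
  have hmapW : Measure.map (fun ω => ((Y₁' ω, Y₂' ω), Z' ω)) ℙ
      = ((volume.withDensity (gamD m)).prod (volume.withDensity (gamD m))).prod
          (volume.withDensity expD) := by
    rw [(indepFun_iff_map_prod_eq_prod_map_map
        ((hY₁m.prodMk hY₂m).aemeasurable) hZm.aemeasurable).mp hpairYZ, hmapP, hmapZ]
  set t : ℝ := β / α * x with hts
  have ht : 0 ≤ t := mul_nonneg (div_nonneg hβ.le hα.le) hx
  set B : Set ((ℝ × ℝ) × ℝ) := {p | α * p.2 / (1 + β * (δ₁ * p.1.1 + δ₂ * p.1.2)) ≤ x} with hBdef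
  have hBm : MeasurableSet B := by
    apply measurableSet_le _ measurable_const
    exact (measurable_snd.const_mul α).div
      ((((measurable_fst.fst.const_mul δ₁).add (measurable_fst.snd.const_mul δ₂)).const_mul
        β).const_add 1)
  have hWB : {ω | α * Z' ω / (1 + β * (δ₁ * Y₁' ω + δ₂ * Y₂' ω)) ≤ x}
      = (fun ω => ((Y₁' ω, Y₂' ω), Z' ω)) ⁻¹' B := rfl
  rw [hWB, ← Measure.map_apply_of_aemeasurable
    (((hY₁m.prodMk hY₂m).prodMk hZm).aemeasurable) hBm, hmapW, Measure.prod_apply hBm]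
  -- a.e. nonnegative coordinates
  have hcoord : ∀ᵐ p ∂((volume.withDensity (gamD m)).prod (volume.withDensity (gamD m))),
      0 ≤ p.1 ∧ 0 ≤ p.2 := by
    rw [ae_iff]
    have hnull : ((volume.withDensity (gamD m)).prod (volume.withDensity (gamD m)))
        ((Set.Iio 0 ×ˢ Set.univ) ∪ (Set.univ ×ˢ Set.Iio 0)) = 0 :=
      measure_union_null (by rw [Measure.prod_prod, gamD_Iio, zero_mul])
        (by rw [Measure.prod_prod, gamD_Iio, mul_zero])
    apply measure_mono_null _ hnull
    intro p hp
    simp only [Set.mem_setOf_eq, not_and_or, not_le] at hp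
    rcases hp with hp | hp
    · exact Or.inl (by simp [hp])
    · exact Or.inr (by simp [hp])
  -- evaluate the inner measure a.e.
  have hinner : ∀ᵐ p ∂((volume.withDensity (gamD m)).prod (volume.withDensity (gamD m))),
      (volume.withDensity expD) (Prod.mk p ⁻¹' B)
        = 1 - (ENNReal.ofReal (Real.exp (-x / α)) *
            (ENNReal.ofReal (Real.exp (-(t * δ₁ * p.1))) *
             ENNReal.ofReal (Real.exp (-(t * δ₂ * p.2))))) := by
    filter_upwards [hcoord] with p hp
    obtain ⟨h1, h2⟩ := hp
    have hS : (0 : ℝ) ≤ β * (δ₁ * p.1 + δ₂ * p.2) :=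
      mul_nonneg hβ.le (add_nonneg (mul_nonneg hδ₁.le h1) (mul_nonneg hδ₂.le h2))
    have hD : (0 : ℝ) < 1 + β * (δ₁ * p.1 + δ₂ * p.2) := by linarith
    have hset : Prod.mk p ⁻¹' B = Set.Iic (x * (1 + β * (δ₁ * p.1 + δ₂ * p.2)) / α) := by
      ext z
      simp only [hBdef, Set.mem_preimage, Set.mem_setOf_eq, Set.mem_Iic]
      rw [div_le_iff₀ hD, le_div_iff₀ hα]
      constructor <;> intro <;> linarith
    have hc : (0 : ℝ) ≤ x * (1 + β * (δ₁ * p.1 + δ₂ * p.2)) / α :=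
      div_nonneg (mul_nonneg hx hD.le) hα.le
    rw [hset, expD_eq, withDensity_apply _ measurableSet_Iic,
      lintegral_exponentialPDF_eq_antiDeriv one_pos, if_pos hc, one_mul]
    have he : Real.exp (-(x * (1 + β * (δ₁ * p.1 + δ₂ * p.2)) / α))
        = Real.exp (-x / α) * (Real.exp (-(t * δ₁ * p.1)) * Real.exp (-(t * δ₂ * p.2))) := by
      rw [← Real.exp_add, ← Real.exp_add]
      congr 1
      rw [hts]
      field_simp
      ring
    rw [he, ENNReal.ofReal_sub _ (by positivity), ENNReal.ofReal_one,
      ENNReal.ofReal_mul (Real.exp_nonneg _), ENNReal.ofReal_mul (Real.exp_nonneg _)]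
  rw [lintegral_congr_ae hinner]
  -- split off the constant 1
  have hGm : Measurable (fun p : ℝ × ℝ => ENNReal.ofReal (Real.exp (-x / α)) *
      (ENNReal.ofReal (Real.exp (-(t * δ₁ * p.1))) *
       ENNReal.ofReal (Real.exp (-(t * δ₂ * p.2))))) := by
    apply Measurable.const_mul
    exact ((measurable_fst.const_mul (t * δ₁)).neg.exp.ennreal_ofReal).mul
      ((measurable_snd.const_mul (t * δ₂)).neg.exp.ennreal_ofReal)
  have hGle : ∀ᵐ p ∂((volume.withDensity (gamD m)).prod (volume.withDensity (gamD m))),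
      ENNReal.ofReal (Real.exp (-x / α)) *
        (ENNReal.ofReal (Real.exp (-(t * δ₁ * p.1))) *
         ENNReal.ofReal (Real.exp (-(t * δ₂ * p.2)))) ≤ 1 := by
    filter_upwards [hcoord] with p hp
    obtain ⟨h1, h2⟩ := hp
    have e1 : ENNReal.ofReal (Real.exp (-x / α)) ≤ 1 := by
      rw [← ENNReal.ofReal_one]
      apply ENNReal.ofReal_le_ofReal
      rw [Real.exp_le_one_iff]
      rw [neg_div]
      simp only [Left.neg_nonpos_iff]
      positivity
    have e2 : ENNReal.ofReal (Real.exp (-(t * δ₁ * p.1))) ≤ 1 := by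
      rw [← ENNReal.ofReal_one]
      apply ENNReal.ofReal_le_ofReal
      rw [Real.exp_le_one_iff]
      simp only [Left.neg_nonpos_iff]
      exact mul_nonneg (mul_nonneg ht hδ₁.le) h1
    have e3 : ENNReal.ofReal (Real.exp (-(t * δ₂ * p.2))) ≤ 1 := by
      rw [← ENNReal.ofReal_one]
      apply ENNReal.ofReal_le_ofReal
      rw [Real.exp_le_one_iff]
      simp only [Left.neg_nonpos_iff]
      exact mul_nonneg (mul_nonneg ht hδ₂.le) h2
    exact mul_le_one' e1 (mul_le_one' e2 e3)
  have hGfin : ∫⁻ p, (ENNReal.ofReal (Real.exp (-x / α)) *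
      (ENNReal.ofReal (Real.exp (-(t * δ₁ * p.1))) *
       ENNReal.ofReal (Real.exp (-(t * δ₂ * p.2)))))
      ∂((volume.withDensity (gamD m)).prod (volume.withDensity (gamD m))) ≠ ⊤ := by
    apply ne_of_lt
    apply lt_of_le_of_lt (lintegral_mono_ae hGle)
    rw [lintegral_one, measure_univ]
    exact ENNReal.one_lt_top
  rw [lintegral_sub hGm hGfin hGle, lintegral_one, measure_univ]
  -- compute the remaining integral
  have hfm : Measurable (fun y : ℝ => ENNReal.ofReal (Real.exp (-(t * δ₁ * y)))) :=
    (measurable_id.const_mul (t * δ₁)).neg.exp.ennreal_ofReal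
  have hgm : Measurable (fun y : ℝ => ENNReal.ofReal (Real.exp (-(t * δ₂ * y)))) :=
    (measurable_id.const_mul (t * δ₂)).neg.exp.ennreal_ofReal
  have hGint : ∫⁻ p, (ENNReal.ofReal (Real.exp (-x / α)) *
      (ENNReal.ofReal (Real.exp (-(t * δ₁ * p.1))) *
       ENNReal.ofReal (Real.exp (-(t * δ₂ * p.2)))))
      ∂((volume.withDensity (gamD m)).prod (volume.withDensity (gamD m)))
      = ENNReal.ofReal (Real.exp (-x / α)) *
          (ENNReal.ofReal (1 / (1 + t * δ₁) ^ (m + 1)) *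
           ENNReal.ofReal (1 / (1 + t * δ₂) ^ (m + 1))) := by
    have hprodm : Measurable (fun p : ℝ × ℝ =>
        ENNReal.ofReal (Real.exp (-(t * δ₁ * p.1))) *
          ENNReal.ofReal (Real.exp (-(t * δ₂ * p.2)))) :=
      ((measurable_fst.const_mul (t * δ₁)).neg.exp.ennreal_ofReal).mul
        ((measurable_snd.const_mul (t * δ₂)).neg.exp.ennreal_ofReal)
    rw [lintegral_const_mul _ hprodm]
    congr 1
    rw [lintegral_prod_mul hfm.aemeasurable hgm.aemeasurable]
    congr 1
    · rw [lintegral_withDensity_eq_lintegral_mul _ (gamD_meas m) hfm]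
      simp only [Pi.mul_apply]
      exact lint_exp_gamma m (mul_nonneg ht hδ₁.le)
    · rw [lintegral_withDensity_eq_lintegral_mul _ (gamD_meas m) hgm]
      simp only [Pi.mul_apply]
      exact lint_exp_gamma m (mul_nonneg ht hδ₂.le)
  rw [hGint]
  -- final identification
  have hb₁ : (0 : ℝ) < 1 + t * δ₁ := by nlinarith
  have hb₂ : (0 : ℝ) < 1 + t * δ₂ := by nlinarith
  rw [partfrac m hδ₁ hδ₂ hne ht]
  rw [← ENNReal.ofReal_mul (by positivity), ← ENNReal.ofReal_mul (Real.exp_nonneg _),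
    ← ENNReal.ofReal_one, ← ENNReal.ofReal_sub _ (by positivity)]
end
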